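/- arXiv:1102.2072 — 9 statements merged into one kernel-verified Lean document; each statement's English description precedes it below -/
import Mathlib

section
/- For every n ≥ 2 and every r > 0, as an identity in [0,∞]: E|T_n|^r = (r/2) · n · (n−1)^{r/2} · ∫_0^n z^{r/2−1} P(U_n* > z) (n−z)^{−(r/2+1)} dz. -/
open MeasureTheory ProbabilityTheory Filter

noncomputable section

/-- The partial sum `S_n = ∑_{i=1}^n X_i`. -/
def Sn {Ω : Type*} (X : ℕ → Ω → ℝ) (n : ℕ) (ω : Ω) : ℝ :=
  ∑ i ∈ Finset.range n, X i ω

/-- `V_n = (∑_{i=1}^n X_i²)^{1/2}`. -/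
def Vn {Ω : Type*} (X : ℕ → Ω → ℝ) (n : ℕ) (ω : Ω) : ℝ :=
  Real.sqrt (∑ i ∈ Finset.range n, (X i ω) ^ 2)

/-- The sample variance `σ̂_n² = (1/(n-1)) ∑_{i=1}^n (X_i - S_n/n)²`. -/
def sigmaSq {Ω : Type*} (X : ℕ → Ω → ℝ) (n : ℕ) (ω : Ω) : ℝ :=
  (1 / ((n : ℝ) - 1)) * ∑ i ∈ Finset.range n, (X i ω - Sn X n ω / n) ^ 2

/-- Student's t-statistic `T_n = n^{-1/2} σ̂_n^{-1} S_n` when `σ̂_n > 0`, and `0` otherwise. -/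
def Tstat {Ω : Type*} (X : ℕ → Ω → ℝ) (n : ℕ) (ω : Ω) : ℝ :=
  if 0 < sigmaSq X n ω then Sn X n ω / (Real.sqrt n * Real.sqrt (sigmaSq X n ω)) else 0

/-- `U_n* = (S_n/V_n)²` if `V_n > 0` and `(S_n/V_n)² ≠ n`, and `U_n* = 0` otherwise. -/
def Ustar {Ω : Type*} (X : ℕ → Ω → ℝ) (n : ℕ) (ω : Ω) : ℝ :=
  if 0 < Vn X n ω ∧ (Sn X n ω / Vn X n ω) ^ 2 ≠ (n : ℝ) then (Sn X n ω / Vn X n ω) ^ 2 else 0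

/-- 1D lintegral change of variables. -/
lemma my_lintegral_image {s : Set ℝ} {f : ℝ → ℝ} {f' : ℝ → ℝ}
    (hs : MeasurableSet s) (hf' : ∀ x ∈ s, HasDerivWithinAt f (f' x) s x)
    (hf : Set.InjOn f s) (g : ℝ → ENNReal) :
    ∫⁻ x in f '' s, g x = ∫⁻ x in s, ENNReal.ofReal |f' x| * g (f x) := by
  simpa only [ContinuousLinearMap.det_toSpanSingleton] using
    MeasureTheory.lintegral_image_eq_lintegral_abs_det_fderiv_mul volume hs
      (fun x hx => (hf' x hx).hasFDerivWithinAt) hf g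

set_option maxHeartbeats 2000000 in
/-- For i.i.d. `X_i`, every `n ≥ 2` and every `r > 0`, as an identity in `[0,∞]`:
`E|T_n|^r = (r/2)·n·(n−1)^{r/2} ∫_0^n z^{r/2−1} P(U_n* > z) (n−z)^{−(r/2+1)} dz`. -/
theorem lintegral_abs_tstat_rpow_eq {Ω : Type*} [MeasurableSpace Ω]
    (P : Measure Ω) [IsProbabilityMeasure P]
    (X : ℕ → Ω → ℝ) (hmeas : ∀ i, Measurable (X i))
    (hindep : iIndepFun X P)
    (hident : ∀ i, IdentDistrib (X i) (X 0) P P)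
    (n : ℕ) (hn : 2 ≤ n) (r : ℝ) (hr : 0 < r) :
    ∫⁻ ω, ENNReal.ofReal (|Tstat X n ω| ^ r) ∂P
      = ENNReal.ofReal (r / 2 * n * ((n : ℝ) - 1) ^ (r / 2)) *
        ∫⁻ z in Set.Ioo (0 : ℝ) n,
          ENNReal.ofReal (z ^ (r / 2 - 1) * ((n : ℝ) - z) ^ (-(r / 2 + 1))) *
            P {ω | Ustar X n ω > z} := by
  classical
  set N : ℝ := (n : ℝ) with hNdef
  have hN2 : (2:ℝ) ≤ N := by rw [hNdef]; exact_mod_cast hn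
  have hN1 : (1:ℝ) < N := by linarith
  have hN0 : (0:ℝ) < N := by linarith
  have hNm1 : (0:ℝ) < N - 1 := by linarith
  set p : ℝ := r / 2 with hpdef
  have hp0 : 0 < p := by positivity
  set g : ℝ → ℝ := fun u => ((N - 1) * u / (N - u)) ^ p with hgdef
  -- basic facts about Ustar
  have hU0 : ∀ ω, 0 ≤ Ustar X n ω := by
    intro ω; unfold Ustar; split_ifs with h
    · positivity
    · exact le_rfl
  have hCS : ∀ ω, (Sn X n ω) ^ 2 ≤ N * ∑ i ∈ Finset.range n, (X i ω) ^ 2 := by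
    intro ω
    have h := Finset.sum_mul_sq_le_sq_mul_sq (Finset.range n) (fun i => X i ω) (fun _ => 1)
    simp only [mul_one, one_pow, Finset.sum_const, Finset.card_range, nsmul_eq_mul] at h
    calc (Sn X n ω) ^ 2 ≤ (∑ i ∈ Finset.range n, (X i ω) ^ 2) * N := h
      _ = N * ∑ i ∈ Finset.range n, (X i ω) ^ 2 := mul_comm _ _
  have hUlt : ∀ ω, Ustar X n ω < N := by
    intro ω; unfold Ustar; split_ifs with h
    · obtain ⟨hV, hne⟩ := h
      have hQ0 : 0 < ∑ i ∈ Finset.range n, (X i ω) ^ 2 := by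
        have := Real.sqrt_pos.mp hV
        exact this
      have hV2 : (Vn X n ω) ^ 2 = ∑ i ∈ Finset.range n, (X i ω) ^ 2 :=
        Real.sq_sqrt (le_of_lt hQ0)
      have hle : (Sn X n ω / Vn X n ω) ^ 2 ≤ N := by
        rw [div_pow, hV2, div_le_iff₀ hQ0]
        exact hCS ω
      exact lt_of_le_of_ne hle hne
    · exact hN0
  -- pointwise identity
  have hpt : ∀ ω, |Tstat X n ω| ^ r = g (Ustar X n ω) := by
    intro ω
    set S : ℝ := Sn X n ω with hS
    set Q : ℝ := ∑ i ∈ Finset.range n, (X i ω) ^ 2 with hQ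
    have hQ0 : 0 ≤ Q := by positivity
    have hsum : ∑ i ∈ Finset.range n, (X i ω - S / N) ^ 2 = Q - S ^ 2 / N := by
      have hexp : ∀ i ∈ Finset.range n, (X i ω - S / N) ^ 2
          = (X i ω) ^ 2 - (2 * (S / N)) * X i ω + (S / N) ^ 2 := by
        intro i _; ring
      rw [Finset.sum_congr rfl hexp, Finset.sum_add_distrib, Finset.sum_sub_distrib,
        ← Finset.mul_sum, Finset.sum_const, Finset.card_range,
        show (∑ i ∈ Finset.range n, X i ω) = S from rfl, nsmul_eq_mul,
        show ((n:ℕ):ℝ) = N from rfl]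
      field_simp
      ring
    have hsig : sigmaSq X n ω = (Q - S ^ 2 / N) / (N - 1) := by
      unfold sigmaSq
      rw [← hNdef, ← hS, hsum]
      ring
    by_cases hσ : 0 < sigmaSq X n ω
    · -- nondegenerate case
      have hQS : S ^ 2 / N < Q := by
        rw [hsig] at hσ
        have := (div_pos_iff.mp hσ)
        rcases this with ⟨h1, _⟩ | ⟨_, h2⟩
        · linarith
        · linarith
      have hQpos : 0 < Q := lt_of_le_of_lt (by positivity) hQS
      have hVpos : 0 < Vn X n ω := Real.sqrt_pos.mpr hQpos
      have hV2 : (Vn X n ω) ^ 2 = Q := Real.sq_sqrt (le_of_lt hQpos)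
      have hS2lt : S ^ 2 < N * Q := by
        rw [div_lt_iff₀ hN0] at hQS; linarith
      have hUval : Ustar X n ω = S ^ 2 / Q := by
        unfold Ustar
        rw [if_pos]
        · rw [div_pow, hV2, ← hS]
        · refine ⟨hVpos, ?_⟩
          rw [div_pow, hV2, ← hS]
          intro hcon
          rw [div_eq_iff (ne_of_gt hQpos)] at hcon
          nlinarith
      have hTval : Tstat X n ω = S / (Real.sqrt N * Real.sqrt (sigmaSq X n ω)) := by
        unfold Tstat; rw [if_pos hσ, ← hNdef, ← hS]
      have hA : 0 < Q - S ^ 2 / N := by linarith [hQS]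
      have hTsq : (Tstat X n ω) ^ 2 = (N - 1) * Ustar X n ω / (N - Ustar X n ω) := by
        rw [hTval, hUval, div_pow, mul_pow, Real.sq_sqrt (le_of_lt hN0),
          Real.sq_sqrt (le_of_lt hσ), hsig]
        have h1 : 0 < N * ((Q - S ^ 2 / N) / (N - 1)) := mul_pos hN0 (div_pos hA hNm1)
        have h2 : 0 < N - S ^ 2 / Q := by
          rw [sub_pos, div_lt_iff₀ hQpos]; nlinarith
        rw [div_eq_div_iff (ne_of_gt h1) (ne_of_gt h2)]
        field_simp
      have h2p : ((2:ℕ):ℝ) * p = r := by rw [hpdef]; push_cast; ring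
      have habs : |Tstat X n ω| ^ r = ((Tstat X n ω) ^ 2) ^ p := by
        rw [← sq_abs, ← Real.rpow_natCast |Tstat X n ω| 2,
          ← Real.rpow_mul (abs_nonneg _), h2p]
      rw [habs, hTsq, hgdef]
    · -- degenerate case
      have hT0 : Tstat X n ω = 0 := by unfold Tstat; rw [if_neg hσ]
      have hU0' : Ustar X n ω = 0 := by
        unfold Ustar
        rw [if_neg]
        rintro ⟨hV, hne⟩
        have hQpos : 0 < Q := Real.sqrt_pos.mp hV
        have hV2 : (Vn X n ω) ^ 2 = Q := Real.sq_sqrt (le_of_lt hQpos)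
        have hsigle : sigmaSq X n ω ≤ 0 := not_lt.mp hσ
        rw [hsig] at hsigle
        have hQle : Q - S ^ 2 / N ≤ 0 := by
          by_contra hcon
          push_neg at hcon
          have : 0 < (Q - S ^ 2 / N) / (N - 1) := div_pos hcon hNm1
          linarith
        have hge : N * Q ≤ S ^ 2 := by
          rw [sub_nonpos, le_div_iff₀ hN0] at hQle
          linarith
        have heq : S ^ 2 = N * Q := le_antisymm (by simpa [← hQ, ← hS] using hCS ω) hge
        apply hne
        rw [div_pow, hV2, ← hS, heq, mul_div_assoc, div_self (ne_of_gt hQpos), mul_one]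
      rw [hT0, hU0', abs_zero, Real.zero_rpow (ne_of_gt hr), hgdef]
      simp only [mul_zero, zero_div, sub_zero]
      rw [Real.zero_rpow (ne_of_gt hp0)]
  -- measurability
  have hSm : Measurable (Sn X n) := by
    unfold Sn; exact Finset.measurable_sum _ (fun i _ => hmeas i)
  have hVm : Measurable (Vn X n) := by
    unfold Vn
    exact (Finset.measurable_sum _ (fun i _ => (hmeas i).pow_const 2)).sqrt
  have hUm : Measurable (Ustar X n) := by
    unfold Ustar
    have hcond : MeasurableSet {ω | 0 < Vn X n ω ∧ (Sn X n ω / Vn X n ω) ^ 2 ≠ (n:ℝ)} := by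
      refine (measurableSet_lt measurable_const hVm).inter ?_
      exact (((hSm.div hVm).pow_const 2) (measurableSet_singleton ((n:ℝ)))).compl
    exact Measurable.ite hcond ((hSm.div hVm).pow_const 2) measurable_const
  have hgm : Measurable g := by
    have hφ : Measurable fun u : ℝ => (N - 1) * u / (N - u) :=
      (measurable_const.mul measurable_id).div (measurable_const.sub measurable_id)
    exact (Real.continuous_rpow_const (le_of_lt hp0)).measurable.comp hφ
  -- strict monotonicity on [0, N)
  have hmono : StrictMonoOn g (Set.Ico 0 N) := by
    intro a ha b hb hab
    have ha0 : 0 ≤ a := ha.1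
    have haN : a < N := ha.2
    have hbN : b < N := hb.2
    have hbase : (N - 1) * a / (N - a) < (N - 1) * b / (N - b) := by
      rw [div_lt_div_iff₀ (by linarith) (by linarith)]
      nlinarith [mul_pos (mul_pos hNm1 hN0) (sub_pos.mpr hab)]
    have hbase0 : 0 ≤ (N - 1) * a / (N - a) := by
      apply div_nonneg <;> nlinarith
    exact Real.rpow_lt_rpow hbase0 hbase hp0
  -- image of (0, N) under g
  have hgpos : ∀ z ∈ Set.Ioo (0:ℝ) N, 0 < g z := by
    intro z hz
    have : 0 < (N - 1) * z / (N - z) := by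
      apply div_pos
      · nlinarith [hz.1]
      · linarith [hz.2]
    exact Real.rpow_pos_of_pos this p
  have himg : g '' Set.Ioo 0 N = Set.Ioi 0 := by
    ext t
    constructor
    · rintro ⟨z, hz, rfl⟩
      exact hgpos z hz
    · intro ht
      have ht0 : (0:ℝ) < t := ht
      set s : ℝ := t ^ (2 / r) with hsdef
      have hs0 : 0 < s := Real.rpow_pos_of_pos ht0 _
      set D : ℝ := (N - 1) + s with hDdef
      have hD0 : 0 < D := by positivity
      refine ⟨N * s / D, ⟨by positivity, ?_⟩, ?_⟩
      · rw [div_lt_iff₀ hD0]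
        nlinarith
      · have hD' : D ≠ 0 := ne_of_gt hD0
        have hden : N - N * s / D = N * (N - 1) / D := by
          field_simp
          ring
        have hbase : (N - 1) * (N * s / D) / (N - N * s / D) = s := by
          rw [hden]
          field_simp
        have hexp1 : 2 / r * (r / 2) = 1 := by field_simp
        show ((N - 1) * (N * s / D) / (N - N * s / D)) ^ p = t
        rw [hbase, hsdef, ← Real.rpow_mul (le_of_lt ht0), hpdef, hexp1, Real.rpow_one]
  -- derivative
  set c : ℝ := p * N * (N - 1) ^ p with hcdef
  have hc0 : 0 ≤ c := by
    have : (0:ℝ) < (N - 1) ^ p := Real.rpow_pos_of_pos hNm1 p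
    positivity
  set m : ℝ → ℝ := fun z => z ^ (p - 1) * (N - z) ^ (-(p + 1)) with hmdef
  have hm0 : ∀ z ∈ Set.Ioo (0:ℝ) N, 0 ≤ m z := by
    intro z hz
    have h1 : (0:ℝ) ≤ z ^ (p - 1) := Real.rpow_nonneg (le_of_lt hz.1) _
    have h2 : (0:ℝ) ≤ (N - z) ^ (-(p + 1)) := Real.rpow_nonneg (by linarith [hz.2]) _
    positivity
  have hderiv : ∀ z ∈ Set.Ioo (0:ℝ) N,
      HasDerivWithinAt g (c * m z) (Set.Ioo (0:ℝ) N) z := by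
    intro z hz
    obtain ⟨hz0, hzN⟩ := hz
    have hNz : 0 < N - z := by linarith
    have h1 : HasDerivAt (fun u : ℝ => (N - 1) * u) (N - 1) z := by
      simpa using (hasDerivAt_id z).const_mul (N - 1)
    have h2 : HasDerivAt (fun u : ℝ => N - u) (-1) z := by
      simpa using (hasDerivAt_id z).const_sub N
    have h3 := h1.div h2 (ne_of_gt hNz)
    have hφpos : 0 < (N - 1) * z / (N - z) := by
      apply div_pos
      · nlinarith
      · exact hNz
    have h4 := h3.rpow_const (p := p) (Or.inl (ne_of_gt hφpos))
    have heq : p * ((N - 1) * z / (N - z)) ^ (p - 1)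
        * (((N - 1) * (N - z) - (N - 1) * z * (-1)) / (N - z) ^ 2) = c * m z := by
      have e1 : ((N - 1) * z / (N - z)) ^ (p - 1)
          = (N - 1) ^ (p - 1) * z ^ (p - 1) * ((N - z) ^ (p - 1))⁻¹ := by
        rw [Real.div_rpow (by positivity) (le_of_lt hNz),
          Real.mul_rpow (le_of_lt hNm1) (le_of_lt hz0), div_eq_mul_inv]
      have e2 : (N - 1) ^ (p - 1) * (N - 1) = (N - 1) ^ p := by
        nth_rewrite 2 [← Real.rpow_one (N - 1)]
        rw [← Real.rpow_add hNm1]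
        norm_num
      have e3 : ((N - z) ^ (p - 1))⁻¹ * ((N - z) ^ 2)⁻¹ = (N - z) ^ (-(p + 1)) := by
        rw [← Real.rpow_natCast (N - z) 2, ← Real.rpow_neg (le_of_lt hNz),
          ← Real.rpow_neg (le_of_lt hNz), ← Real.rpow_add hNz]
        norm_num
        ring_nf
      calc p * ((N - 1) * z / (N - z)) ^ (p - 1)
            * (((N - 1) * (N - z) - (N - 1) * z * (-1)) / (N - z) ^ 2)
          = p * N * ((N - 1) ^ (p - 1) * (N - 1)) * z ^ (p - 1)
            * (((N - z) ^ (p - 1))⁻¹ * ((N - z) ^ 2)⁻¹) := by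
            rw [e1, div_eq_mul_inv]; ring
        _ = c * m z := by rw [e2, e3, hcdef, hmdef]; ring
    have h5 : HasDerivAt g (c * m z) z := by
      have h4' : HasDerivAt g (((N - 1) * (N - z) - (N - 1) * z * -1) / (N - z) ^ 2 * p
          * ((N - 1) * z / (N - z)) ^ (p - 1)) z := h4
      convert h4' using 1
      rw [← heq]; ring
    exact h5.hasDerivWithinAt
  -- main computation
  have hgU_nonneg : ∀ ω, 0 ≤ g (Ustar X n ω) := by
    intro ω
    apply Real.rpow_nonneg
    apply div_nonneg
    · have := hU0 ω; nlinarith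
    · linarith [hUlt ω]
  have hgUm : AEMeasurable (fun ω => g (Ustar X n ω)) P := (hgm.comp hUm).aemeasurable
  calc ∫⁻ ω, ENNReal.ofReal (|Tstat X n ω| ^ r) ∂P
      = ∫⁻ ω, ENNReal.ofReal (g (Ustar X n ω)) ∂P := by
        exact lintegral_congr fun ω => by rw [hpt ω]
    _ = ∫⁻ t in Set.Ioi (0:ℝ), P {a | t < g (Ustar X n a)} :=
        lintegral_eq_lintegral_meas_lt P (Filter.Eventually.of_forall hgU_nonneg) hgUm
    _ = ∫⁻ t in g '' Set.Ioo (0:ℝ) N, P {a | t < g (Ustar X n a)} := by rw [himg]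
    _ = ∫⁻ z in Set.Ioo (0:ℝ) N,
          ENNReal.ofReal |c * m z| * P {a | g z < g (Ustar X n a)} :=
        my_lintegral_image measurableSet_Ioo hderiv
          ((hmono.mono (Set.Ioo_subset_Ico_self)).injOn) _
    _ = ∫⁻ z in Set.Ioo (0:ℝ) N,
          ENNReal.ofReal c * (ENNReal.ofReal (m z) * P {ω | Ustar X n ω > z}) := by
        apply setLIntegral_congr_fun measurableSet_Ioo
        intro z hz
        have hset : {a | g z < g (Ustar X n a)} = {ω | Ustar X n ω > z} := by
          ext ω
          have hzmem : z ∈ Set.Ico (0:ℝ) N := ⟨le_of_lt hz.1, hz.2⟩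
          have humem : Ustar X n ω ∈ Set.Ico (0:ℝ) N := ⟨hU0 ω, hUlt ω⟩
          simp only [Set.mem_setOf_eq, gt_iff_lt]
          exact hmono.lt_iff_lt hzmem humem
        beta_reduce
        rw [hset, abs_of_nonneg (mul_nonneg hc0 (hm0 z hz)),
          ENNReal.ofReal_mul hc0, mul_assoc]
    _ = ENNReal.ofReal c *
          ∫⁻ z in Set.Ioo (0:ℝ) N,
            ENNReal.ofReal (m z) * P {ω | Ustar X n ω > z} :=
        lintegral_const_mul' _ _ ENNReal.ofReal_ne_top

end
end

section
/- For every n ≥ 2 and every h ∈ (0,1), the infimum of n − u_n(x) over all x = (x_1,…,x_n) ∈ ℝⁿ with x_1 ≠ 0 and |x_2 − x_1| ≥ h|x_1| equals h²/(2 + 2h + h²), and this infimum is attained; consequently the constant C_1(h) = √(2 + 2h + h²) is optimal in the implication 'n − u_n(x) < h² and x_1 ≠ 0 imply |x_i − x_1| < C_1 h |x_1| for all i ≥ 2'. -/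
open MeasureTheory Filter

noncomputable section

/-- `u_n(x) = (∑_{i=1}^n x_i)² / ∑_{i=1}^n x_i²` for a vector `x = (x_1, …, x_n)`. -/
def uFun (n : ℕ) (x : ℕ → ℝ) : ℝ :=
  (∑ i ∈ Finset.range n, x i) ^ 2 / ∑ i ∈ Finset.range n, (x i) ^ 2

lemma sum_split (n : ℕ) (hn : 2 ≤ n) (f : ℕ → ℝ) :
    ∑ i ∈ Finset.range n, f i = f 0 + f 1 + ∑ i ∈ Finset.Ico 2 n, f i := by
  rw [Finset.range_eq_Ico, ← Finset.sum_Ico_consecutive f (Nat.zero_le 2) hn,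
      ← Finset.range_eq_Ico, Finset.sum_range_succ, Finset.sum_range_one]

lemma key_quad (h a b : ℝ) (hh0 : 0 < h) (hab : h * |a| ≤ |b - a|) :
    (2 + 2 * h + h ^ 2) * (a + b) ^ 2 ≤ (2 + h) ^ 2 * (a ^ 2 + b ^ 2) := by
  have hf : 0 ≤ (|b - a| - h * |a|) * ((1 + h) * |b - a| + h * |a|) := by
    apply mul_nonneg (by linarith)
    have := abs_nonneg a
    have := abs_nonneg (b - a)
    nlinarith
  have had : a * (b - a) ≤ |a| * |b - a| := by
    rw [← abs_mul]; exact le_abs_self _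
  nlinarith [sq_abs a, sq_abs (b - a), sq_nonneg h, abs_nonneg a, abs_nonneg (b - a)]

lemma witness_val (n : ℕ) (hn : 2 ≤ n) (g : ℝ) (hg : 0 < g) :
    ∃ x : ℕ → ℝ, x 0 = 1 ∧ x 1 = 1 + g ∧
      (n : ℝ) - uFun n x = g ^ 2 / (2 + 2 * g + g ^ 2) := by
  set c : ℝ := (2 + 2 * g + g ^ 2) / (2 + g) with hc
  refine ⟨fun i => if i = 0 then 1 else if i = 1 then 1 + g else c, rfl, rfl, ?_⟩
  set x : ℕ → ℝ := fun i => if i = 0 then 1 else if i = 1 then 1 + g else c with hx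
  have hm : (0 : ℝ) ≤ (n : ℝ) - 2 := by
    have : (2 : ℝ) ≤ (n : ℝ) := by exact_mod_cast hn
    linarith
  have hcard : ((Finset.Ico 2 n).card : ℝ) = (n : ℝ) - 2 := by
    rw [Nat.card_Ico]
    push_cast [Nat.cast_sub hn]
    ring
  have hconst : ∀ f : ℕ → ℝ, (∀ i, 2 ≤ i → f i = c) →
      ∑ i ∈ Finset.Ico 2 n, f i = ((n : ℝ) - 2) * c := by
    intro f hf
    rw [Finset.sum_congr rfl (fun i hi => hf i (Finset.mem_Ico.mp hi).1),
      Finset.sum_const, nsmul_eq_mul, hcard]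
  have hS : ∑ i ∈ Finset.range n, x i = 1 + (1 + g) + ((n : ℝ) - 2) * c := by
    rw [sum_split n hn]
    have : ∑ i ∈ Finset.Ico 2 n, x i = ((n : ℝ) - 2) * c := by
      apply hconst
      intro i hi
      simp only [hx, if_neg (by omega : i ≠ 0), if_neg (by omega : i ≠ 1)]
    rw [this]
    simp [hx]
  have hcsq : ∀ i, 2 ≤ i → (x i) ^ 2 = c ^ 2 := by
    intro i hi
    simp only [hx, if_neg (by omega : i ≠ 0), if_neg (by omega : i ≠ 1)]
  have hQ : ∑ i ∈ Finset.range n, (x i) ^ 2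
      = 1 + (1 + g) ^ 2 + ((n : ℝ) - 2) * c ^ 2 := by
    rw [sum_split n hn (fun i => (x i) ^ 2)]
    have : ∑ i ∈ Finset.Ico 2 n, (x i) ^ 2 = ((n : ℝ) - 2) * c ^ 2 := by
      rw [Finset.sum_congr rfl (fun i hi => hcsq i (Finset.mem_Ico.mp hi).1),
        Finset.sum_const, nsmul_eq_mul, hcard]
    rw [this]
    simp [hx]
  have hs : (0 : ℝ) < 2 + g := by linarith
  have hq : (0 : ℝ) < 2 + 2 * g + g ^ 2 := by nlinarith
  have hQpos : (0 : ℝ) < 1 + (1 + g) ^ 2 + ((n : ℝ) - 2) * c ^ 2 := by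
    have := mul_nonneg hm (sq_nonneg c)
    nlinarith
  have hn2 : (n : ℝ) = ((n : ℝ) - 2) + 2 := by ring
  rw [uFun, hS, hQ, hc]
  rw [hn2]
  set m : ℝ := (n : ℝ) - 2
  have hQpos' : (0 : ℝ) < 1 + (1 + g) ^ 2 + m * ((2 + 2 * g + g ^ 2) / (2 + g)) ^ 2 := hQpos
  simp only [add_sub_cancel_right]
  field_simp
  ring

lemma core_ineq (q s m u0 T A B : ℝ) (hq : 0 < q) (hs : 0 < s) (hm : 0 ≤ m)
    (hBnn : 0 ≤ B) (f1 : q * u0 ^ 2 ≤ s ^ 2 * A) (f2 : T ^ 2 ≤ m * B) :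
    q * (u0 + T) ^ 2 ≤ (s ^ 2 + m * q) * (A + B) := by
  rcases eq_or_lt_of_le hm with hm0 | hmpos
  · have hT0 : T = 0 := by
      have h1 : T ^ 2 ≤ 0 := by rw [← hm0] at f2; linarith
      nlinarith [sq_nonneg T]
    rw [hT0, ← hm0]
    have : (0:ℝ) ≤ s ^ 2 * B := mul_nonneg (sq_nonneg s) hBnn
    nlinarith
  · have hpos : (0 : ℝ) < m * s ^ 2 := mul_pos hmpos (pow_pos hs 2)
    have a1 : m * s ^ 2 * (q * u0 ^ 2) ≤ m * s ^ 2 * (s ^ 2 * A) :=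
      mul_le_mul_of_nonneg_left f1 hpos.le
    have a2 : s ^ 2 * s ^ 2 * T ^ 2 ≤ s ^ 2 * s ^ 2 * (m * B) :=
      mul_le_mul_of_nonneg_left f2 (by positivity)
    have a3 : m ^ 2 * q * (q * u0 ^ 2) ≤ m ^ 2 * q * (s ^ 2 * A) :=
      mul_le_mul_of_nonneg_left f1 (by positivity)
    have a4 : m * q * s ^ 2 * T ^ 2 ≤ m * q * s ^ 2 * (m * B) :=
      mul_le_mul_of_nonneg_left f2 (by positivity)
    have a5 : (0 : ℝ) ≤ (s ^ 2 * T - m * q * u0) ^ 2 := sq_nonneg _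
    have step : m * s ^ 2 * (q * (u0 + T) ^ 2) ≤ m * s ^ 2 * ((s ^ 2 + m * q) * (A + B)) := by
      nlinarith [a1, a2, a3, a4, a5]
    exact le_of_mul_le_mul_left step hpos

lemma lower_bound (n : ℕ) (hn : 2 ≤ n) (h : ℝ) (hh0 : 0 < h) (x : ℕ → ℝ)
    (hx0 : x 0 ≠ 0) (hgap : h * |x 0| ≤ |x 1 - x 0|) :
    h ^ 2 / (2 + 2 * h + h ^ 2) ≤ (n : ℝ) - uFun n x := by
  have hq : (0 : ℝ) < 2 + 2 * h + h ^ 2 := by nlinarith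
  have hs : (0 : ℝ) < 2 + h := by linarith
  have hm : (0 : ℝ) ≤ (n : ℝ) - 2 := by
    have : (2 : ℝ) ≤ (n : ℝ) := by exact_mod_cast hn
    linarith
  have hBnn : (0 : ℝ) ≤ ∑ i ∈ Finset.Ico 2 n, (x i) ^ 2 :=
    Finset.sum_nonneg fun i _ => sq_nonneg _
  have f1 : (2 + 2 * h + h ^ 2) * (x 0 + x 1) ^ 2 ≤ (2 + h) ^ 2 * ((x 0) ^ 2 + (x 1) ^ 2) :=
    key_quad h (x 0) (x 1) hh0 hgap
  have f2 : (∑ i ∈ Finset.Ico 2 n, x i) ^ 2 ≤ ((n : ℝ) - 2) * ∑ i ∈ Finset.Ico 2 n, (x i) ^ 2 := by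
    have hcs := sq_sum_le_card_mul_sum_sq (s := Finset.Ico 2 n) (f := x)
    have hcard : ((Finset.Ico 2 n).card : ℝ) = (n : ℝ) - 2 := by
      rw [Nat.card_Ico]
      push_cast [Nat.cast_sub hn]
      ring
    calc (∑ i ∈ Finset.Ico 2 n, x i) ^ 2
        ≤ ((Finset.Ico 2 n).card : ℝ) * ∑ i ∈ Finset.Ico 2 n, (x i) ^ 2 := by exact_mod_cast hcs
      _ = ((n : ℝ) - 2) * ∑ i ∈ Finset.Ico 2 n, (x i) ^ 2 := by rw [hcard]
  have key := core_ineq (2 + 2 * h + h ^ 2) (2 + h) ((n : ℝ) - 2) (x 0 + x 1)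
    (∑ i ∈ Finset.Ico 2 n, x i) ((x 0) ^ 2 + (x 1) ^ 2) (∑ i ∈ Finset.Ico 2 n, (x i) ^ 2)
    hq hs hm hBnn f1 f2
  have hx0sq : (0 : ℝ) < (x 0) ^ 2 := by
    rcases lt_or_gt_of_ne hx0 with h' | h' <;> nlinarith
  have hQpos : (0 : ℝ) < ((x 0) ^ 2 + (x 1) ^ 2) + ∑ i ∈ Finset.Ico 2 n, (x i) ^ 2 := by
    have := sq_nonneg (x 1); linarith
  set u0 : ℝ := x 0 + x 1
  set T : ℝ := ∑ i ∈ Finset.Ico 2 n, x i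
  set B : ℝ := ∑ i ∈ Finset.Ico 2 n, (x i) ^ 2
  set A : ℝ := (x 0) ^ 2 + (x 1) ^ 2
  have hid : (2 + h) ^ 2 + ((n : ℝ) - 2) * (2 + 2 * h + h ^ 2)
      = (n : ℝ) * (2 + 2 * h + h ^ 2) - h ^ 2 := by ring
  rw [hid] at key
  have hS : ∑ i ∈ Finset.range n, x i = u0 + T := by
    rw [sum_split n hn]
  have hQsum : ∑ i ∈ Finset.range n, (x i) ^ 2 = A + B := by
    rw [sum_split n hn (fun i => (x i) ^ 2)]
  have huf : uFun n x = (u0 + T) ^ 2 / (A + B) := by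
    rw [uFun, hS, hQsum]
  rw [huf]
  have hdiv : (u0 + T) ^ 2 / (A + B)
      ≤ ((n : ℝ) * (2 + 2 * h + h ^ 2) - h ^ 2) / (2 + 2 * h + h ^ 2) := by
    rw [div_le_div_iff₀ hQpos hq]
    nlinarith [key]
  have hexp : ((n : ℝ) * (2 + 2 * h + h ^ 2) - h ^ 2) / (2 + 2 * h + h ^ 2)
      = (n : ℝ) - h ^ 2 / (2 + 2 * h + h ^ 2) := by
    field_simp
  rw [hexp] at hdiv
  linarith

/-- The infimum of `n − u_n(x)` over all vectors `x` with `x_1 ≠ 0` and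
`|x_2 − x_1| ≥ h|x_1|` equals `h²/(2 + 2h + h²)` and is attained; consequently the constant
`C₁(h) = √(2 + 2h + h²)` is optimal in the implication
"`n − u_n(x) < h²` and `x_1 ≠ 0` imply `|x_i − x_1| < C₁·h·|x_1|` for all `i ≥ 2`". -/
theorem isLeast_n_sub_u_and_optimal (n : ℕ) (hn : 2 ≤ n) (h : ℝ)
    (hh : h ∈ Set.Ioo (0 : ℝ) 1) :
    IsLeast {v : ℝ | ∃ x : ℕ → ℝ, x 0 ≠ 0 ∧ h * |x 0| ≤ |x 1 - x 0| ∧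
        v = (n : ℝ) - uFun n x}
      (h ^ 2 / (2 + 2 * h + h ^ 2)) ∧
    ∀ C : ℝ, C < Real.sqrt (2 + 2 * h + h ^ 2) →
      ∃ x : ℕ → ℝ, x 0 ≠ 0 ∧ (n : ℝ) - uFun n x < h ^ 2 ∧
        ∃ i, 1 ≤ i ∧ i < n ∧ C * h * |x 0| ≤ |x i - x 0| := by
  obtain ⟨hh0, hh1⟩ := hh
  have h1n : 1 < n := by omega
  constructor
  · constructor
    · obtain ⟨x, hx0, hx1, hval⟩ := witness_val n hn h hh0
      refine ⟨x, by rw [hx0]; norm_num, ?_, hval.symm⟩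
      rw [hx0, hx1]
      simp [abs_of_pos hh0]
    · rintro v ⟨x, hx0, hgap, rfl⟩
      exact lower_bound n hn h hh0 x hx0 hgap
  · intro C hC
    by_cases hC1 : C ≤ 1
    · obtain ⟨x, hx0, hx1, hval⟩ := witness_val n hn h hh0
      refine ⟨x, by rw [hx0]; norm_num, ?_, 1, le_refl 1, h1n, ?_⟩
      · rw [hval]
        exact div_lt_self (by positivity) (by nlinarith)
      · rw [hx0, hx1]
        simp only [abs_one, mul_one, add_sub_cancel_left, abs_of_pos hh0]
        nlinarith
    · push_neg at hC1
      have hC0 : (0 : ℝ) < C := by linarith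
      have hCsq : C ^ 2 < 2 + 2 * h + h ^ 2 := by
        have := (Real.lt_sqrt hC0.le).mp hC
        linarith
      have hg0 : (0 : ℝ) < C * h := mul_pos hC0 hh0
      obtain ⟨x, hx0, hx1, hval⟩ := witness_val n hn (C * h) hg0
      refine ⟨x, by rw [hx0]; norm_num, ?_, 1, le_refl 1, h1n, ?_⟩
      · rw [hval]
        have hden : (0 : ℝ) < 2 + 2 * (C * h) + (C * h) ^ 2 := by positivity
        rw [div_lt_iff₀ hden]
        have e1 : C ^ 2 * (1 - h ^ 2) < (2 + 2 * h + h ^ 2) * (1 - h ^ 2) :=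
          mul_lt_mul_of_pos_right hCsq (by nlinarith)
        nlinarith [mul_nonneg (sub_nonneg.mpr hC1.le) hh0.le, sq_nonneg h,
          mul_pos hh0 hh0, mul_pos (mul_pos hh0 hh0) hh0,
          mul_pos (mul_pos (mul_pos hh0 hh0) hh0) hh0]
      · rw [hx0, hx1]
        simp only [abs_one, mul_one, add_sub_cancel_left, abs_of_pos hg0]
        exact le_refl _

end
end

section
/- Let n ≥ 2, let x = (x_1,…,x_n) ∈ ℝⁿ with x_1 ≠ 0, and let h ∈ (0,1). If |x_i − x_1| < h·|x_1|/√(n−1) for every i = 2,…,n, then n − u_n(x) < h². -/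
open MeasureTheory Filter

noncomputable section

/-- If `x_1 ≠ 0`, `h ∈ (0,1)` and `|x_i − x_1| < h·|x_1|/√(n−1)` for every `i = 2, …, n`,
then `n − u_n(x) < h²`. -/
theorem u_close_of_abs_sub_lt (n : ℕ) (hn : 2 ≤ n) (x : ℕ → ℝ) (hx0 : x 0 ≠ 0)
    (h : ℝ) (hh : h ∈ Set.Ioo (0 : ℝ) 1)
    (hd : ∀ i, 1 ≤ i → i < n → |x i - x 0| < h * |x 0| / Real.sqrt ((n : ℝ) - 1)) :
    (n : ℝ) - uFun n x < h ^ 2 := by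
  obtain ⟨hh0, hh1⟩ := hh
  have hn1 : (1 : ℝ) ≤ (n : ℝ) - 1 := by
    have : (2 : ℝ) ≤ n := by exact_mod_cast hn
    linarith
  have hs : Real.sqrt ((n : ℝ) - 1) > 0 := Real.sqrt_pos.mpr (by linarith)
  have hs2 : Real.sqrt ((n : ℝ) - 1) ^ 2 = (n : ℝ) - 1 := Real.sq_sqrt (by linarith)
  have hx0sq : 0 < (x 0) ^ 2 := by positivity
  set A := ∑ i ∈ Finset.range n, x i with hA
  set B := ∑ i ∈ Finset.range n, (x i) ^ 2 with hB
  set Q := ∑ i ∈ Finset.range n, (x i - x 0) ^ 2 with hQdef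
  set S := ∑ i ∈ Finset.range n, (x i - x 0) with hSdef
  -- bound on Q
  have hb : (0:ℝ) < h * |x 0| / Real.sqrt ((n : ℝ) - 1) := by positivity
  have hQ : Q < h ^ 2 * (x 0) ^ 2 := by
    have hsplit : Q = (x 0 - x 0)^2 + ∑ i ∈ Finset.Ico 1 n, (x i - x 0) ^ 2 := by
      rw [hQdef, Finset.range_eq_Ico, Finset.sum_eq_sum_Ico_succ_bot (by omega)]
    have hne : (Finset.Ico 1 n).Nonempty := by
      rw [Finset.nonempty_Ico]; omega
    have hlt : ∑ i ∈ Finset.Ico 1 n, (x i - x 0) ^ 2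
        < ∑ _i ∈ Finset.Ico 1 n, (h * |x 0| / Real.sqrt ((n : ℝ) - 1)) ^ 2 := by
      apply Finset.sum_lt_sum_of_nonempty hne
      intro i hi
      rw [Finset.mem_Ico] at hi
      have := hd i hi.1 hi.2
      calc (x i - x 0)^2 = |x i - x 0|^2 := (sq_abs _).symm
        _ < (h * |x 0| / Real.sqrt ((n : ℝ) - 1)) ^ 2 :=
            pow_lt_pow_left₀ this (abs_nonneg _) (by norm_num)
    have hcard : ((Finset.Ico 1 n).card : ℝ) = (n : ℝ) - 1 := by
      rw [Nat.card_Ico]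
      have : (1:ℕ) ≤ n := by omega
      push_cast [Nat.cast_sub this]
      ring
    have hconst : ∑ _i ∈ Finset.Ico 1 n, (h * |x 0| / Real.sqrt ((n : ℝ) - 1)) ^ 2
        = h ^ 2 * (x 0) ^ 2 := by
      rw [Finset.sum_const, nsmul_eq_mul, hcard, div_pow, mul_pow, sq_abs, hs2]
      field_simp
    have hx00 : (x 0 - x 0)^2 = 0 := by ring
    rw [hsplit, hx00, zero_add]
    calc _ < _ := hlt
      _ = h ^ 2 * (x 0) ^ 2 := hconst
  -- relations
  have hS : S = A - n * x 0 := by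
    rw [hSdef, hA, Finset.sum_sub_distrib, Finset.sum_const, Finset.card_range,
      nsmul_eq_mul]
  have hQB : Q = B - 2 * x 0 * A + n * (x 0) ^ 2 := by
    rw [hQdef, hB, hA]
    rw [Finset.mul_sum, ← Finset.sum_sub_distrib]
    rw [show (n : ℝ) * (x 0) ^ 2 = ∑ _i ∈ Finset.range n, (x 0)^2 by
      rw [Finset.sum_const, Finset.card_range, nsmul_eq_mul]]
    rw [← Finset.sum_add_distrib]
    apply Finset.sum_congr rfl
    intro i _
    ring
  have hBpos : 0 < B :=
    lt_of_lt_of_le hx0sq (by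
      simpa using Finset.single_le_sum (f := fun i => (x i)^2)
        (fun i _ => sq_nonneg (x i)) (Finset.mem_range.mpr (by omega : 0 < n)))
  have hA' : A = S + n * x 0 := by rw [hS]; ring
  have hB' : B = Q + 2 * x 0 * S + n * (x 0) ^ 2 := by
    rw [hQdef, hB, hSdef]
    rw [Finset.mul_sum]
    rw [show (n : ℝ) * (x 0) ^ 2 = ∑ _i ∈ Finset.range n, (x 0)^2 by
      rw [Finset.sum_const, Finset.card_range, nsmul_eq_mul]]
    rw [← Finset.sum_add_distrib, ← Finset.sum_add_distrib]
    apply Finset.sum_congr rfl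
    intro i _
    ring
  have key : ((n : ℝ) - h ^ 2) * B < A ^ 2 := by
    have hnh : 0 < (n : ℝ) - h ^ 2 := by nlinarith
    rw [hA', hB']
    nlinarith [sq_nonneg (S + h^2 * x 0), mul_pos hnh (by linarith : (0:ℝ) < h^2 * (x 0)^2 - Q)]
  have : (n : ℝ) - h ^ 2 < A ^ 2 / B := by
    rw [lt_div_iff₀ hBpos]; exact key
  have huf : uFun n x = A ^ 2 / B := rfl
  rw [huf]
  linarith

end
end

section
/- Let n ≥ 3 be odd, let h ∈ (0,1), and let C_2 > √(n/(n − h²)). Then there exists x = (x_1,…,x_n) ∈ ℝⁿ with x_1 ≠ 0 and |x_i − x_1| < C_2·h·|x_1|/√(n−1) for every i = 2,…,n, such that n − u_n(x) ≥ h². In other words, for odd n a constant C_2 in the implication '|x_i − x_1| < C_2 h |x_1|/√(n−1) for all i ≥ 2 implies n − u_n(x) < h²' must satisfy C_2 ≤ √(n/(n − h²)). -/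
open MeasureTheory Filter

noncomputable section

/-- For odd `n ≥ 3`, `h ∈ (0,1)` and any `C₂ > √(n/(n − h²))`, there is a vector `x` with
`x_1 ≠ 0` and `|x_i − x_1| < C₂·h·|x_1|/√(n−1)` for all `i = 2, …, n`, yet
`n − u_n(x) ≥ h²`; i.e. for odd `n` the constant `C₂` in the implication
"`|x_i − x_1| < C₂·h·|x_1|/√(n−1)` for all `i ≥ 2` implies `n − u_n(x) < h²`"
must satisfy `C₂ ≤ √(n/(n − h²))`. -/
theorem exists_u_far_of_large_const (n : ℕ) (hn : 3 ≤ n) (hodd : Odd n)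
    (h : ℝ) (hh : h ∈ Set.Ioo (0 : ℝ) 1)
    (C₂ : ℝ) (hC : Real.sqrt ((n : ℝ) / ((n : ℝ) - h ^ 2)) < C₂) :
    ∃ x : ℕ → ℝ, x 0 ≠ 0 ∧
      (∀ i, 1 ≤ i → i < n → |x i - x 0| < C₂ * h * |x 0| / Real.sqrt ((n : ℝ) - 1)) ∧
      h ^ 2 ≤ (n : ℝ) - uFun n x := by
  obtain ⟨hh0, hh1⟩ := hh
  obtain ⟨k, hk⟩ := hodd
  have hk1 : 1 ≤ k := by omega
  have hA3 : (3:ℝ) ≤ (n:ℝ) := by exact_mod_cast hn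
  have hh2 : h^2 < 1 := by nlinarith
  have hAh : (0:ℝ) < (n:ℝ) - h^2 := by linarith
  have hA1 : (0:ℝ) < (n:ℝ) - 1 := by linarith
  set s := Real.sqrt ((n:ℝ)/((n:ℝ)-h^2)) with hs
  have hs0 : 0 < s := Real.sqrt_pos.2 (by positivity)
  have hs2 : s^2 = (n:ℝ)/((n:ℝ)-h^2) := Real.sq_sqrt (by positivity)
  set r := Real.sqrt ((n:ℝ)-1) with hr
  have hr0 : 0 < r := Real.sqrt_pos.2 hA1
  have hrt : r^2 = (n:ℝ)-1 := Real.sq_sqrt (le_of_lt hA1)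
  set t := h * s / r with ht
  have ht0 : 0 < t := by positivity
  have ht2 : ((n:ℝ)-1) * t^2 = h^2 * ((n:ℝ)/((n:ℝ)-h^2)) := by
    rw [ht, div_pow, hrt, mul_pow, hs2]
    field_simp
  set x : ℕ → ℝ := fun i => if i = 0 then 1 else if i ≤ k then 1 + t else 1 - t with hx
  have hx0 : x 0 = 1 := by simp [hx]
  have hsplit : ∀ g : ℕ → ℝ, ∑ i ∈ Finset.range (2*k+1), g i
      = g 0 + ∑ i ∈ Finset.Ico 1 (k+1), g i + ∑ i ∈ Finset.Ico (k+1) (2*k+1), g i := by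
    intro g
    rw [Finset.range_eq_Ico,
      ← Finset.sum_Ico_consecutive g (by omega : 0 ≤ k+1) (by omega : k+1 ≤ 2*k+1),
      ← Finset.sum_Ico_consecutive g (by omega : 0 ≤ 1) (by omega : 1 ≤ k+1)]
    congr 2
    rw [show Finset.Ico 0 1 = {0} from rfl, Finset.sum_singleton]
  have hsum : ∑ i ∈ Finset.range n, x i = (n:ℝ) := by
    rw [hk, hsplit, hx0]
    have e1 : ∑ i ∈ Finset.Ico 1 (k+1), x i = (k:ℝ) * (1+t) := by
      have hc : ∀ i ∈ Finset.Ico 1 (k+1), x i = 1 + t := by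
        intro i hi
        rw [Finset.mem_Ico] at hi
        simp [hx, show i ≠ 0 by omega, show i ≤ k by omega]
      rw [Finset.sum_congr rfl hc, Finset.sum_const, Nat.card_Ico,
        show k + 1 - 1 = k by omega, nsmul_eq_mul]
    have e2 : ∑ i ∈ Finset.Ico (k+1) (2*k+1), x i = (k:ℝ) * (1-t) := by
      have hc : ∀ i ∈ Finset.Ico (k+1) (2*k+1), x i = 1 - t := by
        intro i hi
        rw [Finset.mem_Ico] at hi
        simp [hx, show i ≠ 0 by omega, show ¬ (i ≤ k) by omega]
      rw [Finset.sum_congr rfl hc, Finset.sum_const, Nat.card_Ico,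
        show 2*k + 1 - (k+1) = k by omega, nsmul_eq_mul]
    rw [e1, e2]
    push_cast [hk]
    ring
  have hsq : ∑ i ∈ Finset.range n, (x i)^2 = (n:ℝ) + ((n:ℝ)-1) * t^2 := by
    rw [hk, hsplit, hx0]
    have e1 : ∑ i ∈ Finset.Ico 1 (k+1), (x i)^2 = (k:ℝ) * (1+t)^2 := by
      have hc : ∀ i ∈ Finset.Ico 1 (k+1), (x i)^2 = (1 + t)^2 := by
        intro i hi
        rw [Finset.mem_Ico] at hi
        simp [hx, show i ≠ 0 by omega, show i ≤ k by omega]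
      rw [Finset.sum_congr rfl hc, Finset.sum_const, Nat.card_Ico,
        show k + 1 - 1 = k by omega, nsmul_eq_mul]
    have e2 : ∑ i ∈ Finset.Ico (k+1) (2*k+1), (x i)^2 = (k:ℝ) * (1-t)^2 := by
      have hc : ∀ i ∈ Finset.Ico (k+1) (2*k+1), (x i)^2 = (1 - t)^2 := by
        intro i hi
        rw [Finset.mem_Ico] at hi
        simp [hx, show i ≠ 0 by omega, show ¬ (i ≤ k) by omega]
      rw [Finset.sum_congr rfl hc, Finset.sum_const, Nat.card_Ico,
        show 2*k + 1 - (k+1) = k by omega, nsmul_eq_mul]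
    rw [e1, e2]
    push_cast [hk]
    ring
  refine ⟨x, by rw [hx0]; norm_num, ?_, ?_⟩
  · intro i hi1 hin
    have hne : i ≠ 0 := by omega
    have habs : |x i - x 0| = t := by
      rw [hx0]
      by_cases hik : i ≤ k
      · simp [hx, hne, hik, abs_of_pos ht0]
      · simp only [hx, if_neg hne, if_neg hik]
        rw [show (1:ℝ) - t - 1 = -t by ring, abs_neg, abs_of_pos ht0]
    rw [habs, hx0, abs_one, mul_one, ht]
    have : h * s < C₂ * h := by nlinarith
    exact div_lt_div_of_pos_right this hr0
  · have hu : uFun n x = (n:ℝ) - h^2 := by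
      rw [uFun, hsum, hsq, ht2]
      have hQ : (0:ℝ) < (n:ℝ) + h^2 * ((n:ℝ)/((n:ℝ)-h^2)) := by positivity
      rw [div_eq_iff hQ.ne']
      field_simp
      ring
    rw [hu]
    linarith

end
end

section
/- For every pair (n, r) with n ≥ 2 an integer and r > 0 real: if E|T_n|^r is finite, then E|T_{n+1}|^r is finite. -/
open MeasureTheory ProbabilityTheory Filter

noncomputable section

namespace StudentAux

open Finset

def drop (k j : ℕ) : ℕ := if j < k then j else j + 1

lemma drop_strictMono (k : ℕ) : StrictMono (drop k) := by
  intro i j hij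
  unfold drop
  split_ifs with h1 h2 h2 <;> omega

lemma drop_injective (k : ℕ) : Function.Injective (drop k) :=
  (drop_strictMono k).injective

lemma sum_drop (f : ℕ → ℝ) {n k : ℕ} (hk : k < n + 1) :
    ∑ j ∈ Finset.range n, f (drop k j) = (∑ i ∈ Finset.range (n + 1), f i) - f k := by
  induction n with
  | zero =>
      interval_cases k
      simp
  | succ m ih =>
      rcases Nat.lt_or_ge k (m + 1) with h | h
      · rw [Finset.sum_range_succ, ih h, Finset.sum_range_succ (n := m + 1)]
        have : drop k m = m + 1 := by simp only [drop, if_neg (by omega : ¬ m < k)]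
        rw [this]; ring
      · have hk' : k = m + 1 := by omega
        subst hk'
        have : ∀ j ∈ Finset.range (m + 1), f (drop (m + 1) j) = f j := by
          intro j hj
          have : drop (m + 1) j = j := by simp only [drop, if_pos (Finset.mem_range.1 hj)]
          rw [this]
        rw [Finset.sum_congr rfl this, Finset.sum_range_succ (n := m + 1)]
        ring

lemma tstat_congr {Ω Ω' : Type*} (X : ℕ → Ω → ℝ) (X' : ℕ → Ω' → ℝ) (n : ℕ) (ω : Ω) (ω' : Ω')
    (h : ∀ i < n, X i ω = X' i ω') : Tstat X n ω = Tstat X' n ω' := by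
  have hS : Sn X n ω = Sn X' n ω' :=
    Finset.sum_congr rfl fun i hi => h i (Finset.mem_range.1 hi)
  have hsig : sigmaSq X n ω = sigmaSq X' n ω' := by
    unfold sigmaSq
    rw [hS]
    exact congrArg _ (Finset.sum_congr rfl fun i hi => by rw [h i (Finset.mem_range.1 hi)])
  unfold Tstat
  rw [hS, hsig]

def tst (a : ℕ → ℝ) (n : ℕ) : ℝ := Tstat (fun i (_ : Unit) => a i) n ()

lemma tstat_eq_tst {Ω : Type*} (X : ℕ → Ω → ℝ) (n : ℕ) (ω : Ω) :
    Tstat X n ω = tst (fun i => X i ω) n :=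
  tstat_congr _ _ _ _ _ (fun _ _ => rfl)

lemma sigma_formula (a : ℕ → ℝ) {m : ℕ} (hm : 2 ≤ m) :
    sigmaSq (fun i (_ : Unit) => a i) m () =
      ((m : ℝ) * (∑ i ∈ Finset.range m, (a i) ^ 2) - (∑ i ∈ Finset.range m, a i) ^ 2) /
        ((m : ℝ) * ((m : ℝ) - 1)) := by
  have hm0 : (m : ℝ) ≠ 0 := by
    have : 0 < m := by omega
    exact_mod_cast this.ne'
  have h : ∀ i ∈ Finset.range m, (a i - (∑ j ∈ Finset.range m, a j) / m) ^ 2 =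
      (a i) ^ 2 - (2 * ((∑ j ∈ Finset.range m, a j) / m)) * a i +
        ((∑ j ∈ Finset.range m, a j) / m) ^ 2 := fun i _ => by ring
  show (1 / ((m : ℝ) - 1)) * ∑ i ∈ Finset.range m, (a i - (∑ j ∈ Finset.range m, a j) / m) ^ 2 = _
  rw [Finset.sum_congr rfl h, Finset.sum_add_distrib, Finset.sum_sub_distrib,
    ← Finset.mul_sum, Finset.sum_const, Finset.card_range, nsmul_eq_mul]
  have hm1 : (m : ℝ) - 1 ≠ 0 := by
    have : (2:ℝ) ≤ m := by exact_mod_cast hm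
    nlinarith
  field_simp
  ring


lemma sigma_pos_iff (a : ℕ → ℝ) {m : ℕ} (hm : 2 ≤ m) :
    0 < sigmaSq (fun i (_ : Unit) => a i) m () ↔
      0 < (m : ℝ) * (∑ i ∈ Finset.range m, (a i) ^ 2) - (∑ i ∈ Finset.range m, a i) ^ 2 := by
  rw [sigma_formula a hm]
  have hden : 0 < (m : ℝ) * ((m : ℝ) - 1) := by
    have : (2:ℝ) ≤ m := by exact_mod_cast hm
    nlinarith
  exact div_pos_iff_of_pos_right hden

lemma tst_sq (a : ℕ → ℝ) {m : ℕ} (hm : 2 ≤ m)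
    (hD : 0 < (m : ℝ) * (∑ i ∈ Finset.range m, (a i) ^ 2) - (∑ i ∈ Finset.range m, a i) ^ 2) :
    (tst a m) ^ 2 = ((m : ℝ) - 1) * (∑ i ∈ Finset.range m, a i) ^ 2 /
      ((m : ℝ) * (∑ i ∈ Finset.range m, (a i) ^ 2) - (∑ i ∈ Finset.range m, a i) ^ 2) := by
  have hsig := (sigma_pos_iff a hm).2 hD
  have hform := sigma_formula a hm
  unfold tst Tstat
  rw [if_pos hsig]
  have hSn : Sn (fun i (_ : Unit) => a i) m () = ∑ i ∈ Finset.range m, a i := rfl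
  rw [div_pow, mul_pow, Real.sq_sqrt (Nat.cast_nonneg m), Real.sq_sqrt hsig.le, hform, hSn]
  have hm1 : (0:ℝ) < (m : ℝ) * ((m:ℝ) - 1) := by
    have : (2:ℝ) ≤ m := by exact_mod_cast hm
    nlinarith
  field_simp

lemma tst_eq_zero (a : ℕ → ℝ) {m : ℕ} (hm : 2 ≤ m)
    (hD : (m : ℝ) * (∑ i ∈ Finset.range m, (a i) ^ 2) - (∑ i ∈ Finset.range m, a i) ^ 2 ≤ 0) :
    tst a m = 0 := by
  have : ¬ 0 < sigmaSq (fun i (_ : Unit) => a i) m () := by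
    rw [sigma_pos_iff a hm]; exact not_lt.2 hD
  unfold tst Tstat
  rw [if_neg this]

lemma cs_nonneg (a : ℕ → ℝ) (m : ℕ) :
    0 ≤ (m : ℝ) * (∑ i ∈ Finset.range m, (a i) ^ 2) - (∑ i ∈ Finset.range m, a i) ^ 2 := by
  have := sq_sum_le_card_mul_sum_sq (s := Finset.range m) (f := a)
  rw [Finset.card_range] at this
  have : ((∑ i ∈ Finset.range m, a i) ^ 2 : ℝ) ≤ (m : ℝ) * ∑ i ∈ Finset.range m, (a i) ^ 2 := by
    exact_mod_cast this
  linarith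


set_option maxHeartbeats 1000000 in
lemma key (a : ℕ → ℝ) {n : ℕ} (hn : 2 ≤ n) :
    (tst a (n + 1)) ^ 2 ≤
      2 * ((n : ℝ) + 1) ^ 2 *
        (1 + ∑ k ∈ Finset.range (n + 1), (tst (fun j => a (drop k j)) n) ^ 2) := by
  have hn2 : (2:ℝ) ≤ (n:ℝ) := by exact_mod_cast hn
  set T2 := (tst a (n + 1)) ^ 2 with hT2def
  set t2 : ℕ → ℝ := fun k => (tst (fun j => a (drop k j)) n) ^ 2 with ht2def
  clear_value T2 t2
  set S := ∑ i ∈ Finset.range (n + 1), a i with hS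
  set Q := ∑ i ∈ Finset.range (n + 1), (a i) ^ 2 with hQ
  set D := ((n : ℝ) + 1) * Q - S ^ 2 with hD
  set A := ∑ k ∈ Finset.range (n + 1), t2 k with hA
  have ht2nonneg : ∀ k, 0 ≤ t2 k := by intro k; rw [ht2def]; exact sq_nonneg _
  have hsumt2 : 0 ≤ A := by rw [hA]; exact Finset.sum_nonneg fun k _ => ht2nonneg k
  have hT2nonneg : 0 ≤ T2 := by rw [hT2def]; exact sq_nonneg _
  have hSk : ∀ k, k < n + 1 → ∑ j ∈ Finset.range n, a (drop k j) = S - a k :=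
    fun k hk => sum_drop a hk
  have hQk : ∀ k, k < n + 1 → ∑ j ∈ Finset.range n, (a (drop k j)) ^ 2 = Q - (a k) ^ 2 :=
    fun k hk => sum_drop (fun i => (a i) ^ 2) hk
  set Dk : ℕ → ℝ := fun k => (n : ℝ) * (Q - (a k) ^ 2) - (S - a k) ^ 2 with hDkdef
  have hDknn : ∀ k, k < n + 1 → 0 ≤ Dk k := by
    intro k hk
    have h := cs_nonneg (fun j => a (drop k j)) n
    rw [hSk k hk, hQk k hk] at h
    exact h
  have hDsum : ∑ k ∈ Finset.range (n + 1), Dk k = ((n : ℝ) - 1) * D := by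
    have h1 : ∀ k ∈ Finset.range (n + 1), Dk k
        = ((n : ℝ) * Q - S ^ 2) + (2 * S) * a k - ((n : ℝ) + 1) * (a k) ^ 2 :=
      fun k _ => by simp only [hDkdef]; ring
    rw [Finset.sum_congr rfl h1, Finset.sum_sub_distrib, Finset.sum_add_distrib,
      ← Finset.mul_sum, ← Finset.mul_sum, Finset.sum_const, Finset.card_range,
      nsmul_eq_mul, ← hS, ← hQ, hD]
    push_cast
    ring
  have ht2eq : ∀ k, k < n + 1 → 0 < Dk k → t2 k * Dk k = ((n : ℝ) - 1) * (S - a k) ^ 2 := by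
    intro k hk hpos
    have h := tst_sq (fun j => a (drop k j)) hn (by rw [hSk k hk, hQk k hk]; exact hpos)
    rw [hSk k hk, hQk k hk] at h
    have h2 : t2 k = ((n : ℝ) - 1) * (S - a k) ^ 2 / Dk k := by
      rw [ht2def, hDkdef]; exact h
    rwa [eq_div_iff hpos.ne'] at h2
  rcases le_or_gt D 0 with hDle | hDpos
  · have h0 : tst a (n + 1) = 0 := by
      apply tst_eq_zero a (show 2 ≤ n + 1 by omega)
      push_cast
      rw [← hS, ← hQ]
      linarith [hDle]
    have hz : T2 = 0 := by rw [hT2def, h0]; ring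
    rw [hz]
    have h1A : (0:ℝ) ≤ 1 + A := by linarith only [hsumt2]
    exact mul_nonneg (by positivity) h1A
  · have hT2' : T2 * D = (n : ℝ) * S ^ 2 := by
      have hc : ((n + 1 : ℕ) : ℝ) * (∑ i ∈ Finset.range (n + 1), (a i) ^ 2)
          - (∑ i ∈ Finset.range (n + 1), a i) ^ 2 = D := by
        push_cast; rw [← hS, ← hQ, hD]
      have h := tst_sq a (show 2 ≤ n + 1 by omega) (by rw [hc]; exact hDpos)
      rw [hc, ← hS] at h
      rw [hT2def, h, div_mul_cancel₀ _ hDpos.ne']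
      push_cast; ring
    by_cases hall : ∀ k ∈ Finset.range (n + 1), 0 < Dk k
    · -- all leave-one-out variances positive
      have hSsum : ∑ k ∈ Finset.range (n + 1), (S - a k) = (n : ℝ) * S := by
        rw [Finset.sum_sub_distrib, Finset.sum_const, Finset.card_range, nsmul_eq_mul, ← hS]
        push_cast; ring
      have hCS2 : ((n : ℝ) * S) ^ 2 ≤ ((n : ℝ) + 1) * ∑ k ∈ Finset.range (n + 1), (S - a k) ^ 2 := by
        have h := sq_sum_le_card_mul_sum_sq (s := Finset.range (n + 1)) (f := fun k => S - a k)
        rw [Finset.card_range] at h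
        rw [← hSsum]
        calc (∑ k ∈ Finset.range (n+1), (S - a k)) ^ 2
            ≤ ((n+1 : ℕ) : ℝ) * ∑ k ∈ Finset.range (n+1), (S - a k) ^ 2 := by exact_mod_cast h
          _ = ((n : ℝ) + 1) * ∑ k ∈ Finset.range (n+1), (S - a k) ^ 2 := by push_cast; ring
      have hSkle : ∀ k ∈ Finset.range (n + 1), (S - a k) ^ 2 ≤ t2 k * D := by
        intro k hk
        have hk' := Finset.mem_range.1 hk
        have hpos := hall k hk
        have ht := ht2eq k hk' hpos
        have hDkle : Dk k ≤ ((n : ℝ) - 1) * D := by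
          have h := Finset.single_le_sum (f := Dk)
            (fun i hi => hDknn i (Finset.mem_range.1 hi)) hk
          rw [hDsum] at h
          exact h
        have hn1 : (0:ℝ) < (n:ℝ) - 1 := by linarith only [hn2]
        have hmul : t2 k * Dk k ≤ t2 k * (((n:ℝ) - 1) * D) :=
          mul_le_mul_of_nonneg_left hDkle (ht2nonneg k)
        have h3 : ((n:ℝ) - 1) * (S - a k) ^ 2 ≤ ((n:ℝ) - 1) * (t2 k * D) := by
          rw [← ht]
          calc t2 k * Dk k ≤ t2 k * (((n:ℝ) - 1) * D) := hmul
            _ = ((n:ℝ) - 1) * (t2 k * D) := by ring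
        exact le_of_mul_le_mul_left h3 hn1
      have hsum2 : ∑ k ∈ Finset.range (n + 1), (S - a k) ^ 2 ≤ A * D := by
        calc ∑ k ∈ Finset.range (n + 1), (S - a k) ^ 2
            ≤ ∑ k ∈ Finset.range (n + 1), t2 k * D := Finset.sum_le_sum hSkle
          _ = A * D := by rw [hA, ← Finset.sum_mul]
      have hchain : (n : ℝ) ^ 2 * S ^ 2 ≤ ((n : ℝ) + 1) * (A * D) := by
        have h1 : ((n:ℝ)+1) * (∑ k ∈ Finset.range (n + 1), (S - a k) ^ 2)
            ≤ ((n:ℝ)+1) * (A * D) := by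
          apply mul_le_mul_of_nonneg_left hsum2 (by positivity)
        calc (n : ℝ) ^ 2 * S ^ 2 = ((n:ℝ) * S) ^ 2 := by ring
          _ ≤ ((n:ℝ)+1) * ∑ k ∈ Finset.range (n + 1), (S - a k) ^ 2 := hCS2
          _ ≤ ((n:ℝ)+1) * (A * D) := h1
      have hmn : ((n:ℝ) * T2) * D ≤ (((n:ℝ) + 1) * A) * D := by
        have h2 : ((n:ℝ)*T2)*D = (n:ℝ)*(T2*D) := by ring
        rw [h2, hT2']
        calc (n:ℝ)*((n:ℝ)*S^2) = (n:ℝ)^2*S^2 := by ring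
          _ ≤ ((n:ℝ)+1)*(A*D) := hchain
          _ = (((n:ℝ)+1)*A)*D := by ring
      have hfin : (n:ℝ) * T2 ≤ ((n:ℝ) + 1) * A := le_of_mul_le_mul_right hmn hDpos
      have h2T2 : 2 * T2 ≤ (n:ℝ) * T2 := mul_le_mul_of_nonneg_right hn2 hT2nonneg
      have hna : ((n:ℝ)+1) * A ≤ 2*((n:ℝ)+1)^2 * A := by
        apply mul_le_mul_of_nonneg_right _ hsumt2
        linarith only [hn2, sq_nonneg ((n:ℝ))]
      have hX : (0:ℝ) ≤ 2*((n:ℝ)+1)^2 * A := mul_nonneg (by positivity) hsumt2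
      have hY : (0:ℝ) ≤ 2*((n:ℝ)+1)^2 := by positivity
      have hexp : 2*((n:ℝ)+1)^2 * (1 + A) = 2*((n:ℝ)+1)^2 + 2*((n:ℝ)+1)^2 * A := by ring
      rw [hexp]
      linarith only [h2T2, hfin, hna, hX, hY]
    · -- one leave-one-out variance vanishes
      push_neg at hall
      obtain ⟨k₀, hk₀mem, hk₀le⟩ := hall
      have hk₀ : k₀ < n + 1 := Finset.mem_range.1 hk₀mem
      have hDk₀ : Dk k₀ = 0 := le_antisymm hk₀le (hDknn k₀ hk₀)
      have hn0 : (n : ℝ) ≠ 0 := by positivity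
      set c := (S - a k₀) / n with hc
      set b := a k₀ with hb
      have hnq : (n:ℝ) * (Q - b ^ 2) = (S - b) ^ 2 := by
        have h := hDk₀; simp only [hDkdef] at h; rw [hb]; linarith
      have hconst : ∀ j, j < n → a (drop k₀ j) = c := by
        intro j hj
        have hzero : ∑ j ∈ Finset.range n, (a (drop k₀ j) - c) ^ 2 = 0 := by
          have hexp : ∀ j ∈ Finset.range n, (a (drop k₀ j) - c) ^ 2
              = (a (drop k₀ j)) ^ 2 - (2 * c) * a (drop k₀ j) + c ^ 2 := fun _ _ => by ring
          rw [Finset.sum_congr rfl hexp, Finset.sum_add_distrib, Finset.sum_sub_distrib,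
            ← Finset.mul_sum, Finset.sum_const, Finset.card_range, nsmul_eq_mul,
            hSk k₀ hk₀, hQk k₀ hk₀]
          rw [hc, ← hb]
          field_simp
          linear_combination hnq
        have h1 := (Finset.sum_eq_zero_iff_of_nonneg (fun i _ => sq_nonneg _)).1 hzero j
          (Finset.mem_range.2 hj)
        have h2 : a (drop k₀ j) - c = 0 := sq_eq_zero_iff.1 h1
        linarith
      have hconst' : ∀ i, i < n + 1 → i ≠ k₀ → a i = c := by
        intro i hi hne
        rcases Nat.lt_or_ge i k₀ with h | h
        · have hh := hconst i (by omega)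
          rwa [show drop k₀ i = i from by simp only [drop, if_pos h]] at hh
        · have hgt : k₀ < i := by omega
          have hh := hconst (i - 1) (by omega)
          rwa [show drop k₀ (i - 1) = i from by
            simp only [drop, if_neg (by omega : ¬ i - 1 < k₀)]; omega] at hh
      have hSc : S - b = (n : ℝ) * c := by
        have h : ∑ j ∈ Finset.range n, a (drop k₀ j) = (n : ℝ) * c := by
          rw [Finset.sum_congr rfl (fun j hj => hconst j (Finset.mem_range.1 hj)),
            Finset.sum_const, Finset.card_range, nsmul_eq_mul]
        rw [hb, ← hSk k₀ hk₀, h]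
      have hQc : Q - b ^ 2 = (n : ℝ) * c ^ 2 := by
        have h : ∑ j ∈ Finset.range n, (a (drop k₀ j)) ^ 2 = (n : ℝ) * c ^ 2 := by
          rw [Finset.sum_congr rfl (fun j hj => by rw [hconst j (Finset.mem_range.1 hj)]),
            Finset.sum_const, Finset.card_range, nsmul_eq_mul]
        rw [hb, ← hQk k₀ hk₀, h]
      have hS' : S = (n : ℝ) * c + b := by linarith
      have hQ' : Q = (n : ℝ) * c ^ 2 + b ^ 2 := by linarith
      have hDval : D = (n : ℝ) * (b - c) ^ 2 := by rw [hD, hS', hQ']; ring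
      have hv : 0 < (b - c) ^ 2 := by
        rcases (sq_nonneg (b - c)).lt_or_eq with h | h
        · exact h
        · exfalso; rw [hDval, ← h] at hDpos; simp at hDpos
      set j₀ := if k₀ = 0 then 1 else 0 with hj₀
      have hj₀lt : j₀ < n + 1 := by simp only [hj₀]; split_ifs <;> omega
      have hj₀ne : j₀ ≠ k₀ := by simp only [hj₀]; split_ifs with h <;> omega
      have haj₀ : a j₀ = c := hconst' j₀ hj₀lt hj₀ne
      have hDj : Dk j₀ = ((n : ℝ) - 1) * (b - c) ^ 2 := by
        simp only [hDkdef]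
        rw [haj₀, hS', hQ']; ring
      have hn1 : (0:ℝ) < (n:ℝ) - 1 := by linarith only [hn2]
      have hDjpos : 0 < Dk j₀ := by rw [hDj]; exact mul_pos hn1 hv
      have ht := ht2eq j₀ hj₀lt hDjpos
      rw [hDj, haj₀, hS'] at ht
      have e2 : t2 j₀ * (b - c) ^ 2 = ((n : ℝ) * c + b - c) ^ 2 := by
        have h := mul_left_cancel₀ hn1.ne'
          (show ((n:ℝ) - 1) * (t2 j₀ * (b - c) ^ 2)
              = ((n:ℝ) - 1) * (((n : ℝ) * c + b - c) ^ 2) by linarith [ht])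
        exact h
      have e1 : T2 * (b - c) ^ 2 = ((n : ℝ) * c + b) ^ 2 := by
        have hnpos : (0:ℝ) < (n:ℝ) := by linarith
        have h := hT2'
        rw [hDval, hS'] at h
        have h2 := mul_left_cancel₀ hnpos.ne'
          (show (n:ℝ) * (T2 * (b - c) ^ 2) = (n:ℝ) * (((n : ℝ) * c + b) ^ 2) by linarith [h])
        exact h2
      have e3 : ((n:ℝ) * ((n:ℝ) * c + b)) ^ 2
          ≤ 2 * ((n:ℝ) + 1) ^ 2 * ((n:ℝ) * c + b - c) ^ 2 + 2 * (b - c) ^ 2 := by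
        linarith only [sq_nonneg (((n:ℝ) + 1) * ((n:ℝ) * c + b - c) + (b - c))]
      have f1 : T2 = ((n:ℝ) * c + b) ^ 2 / (b - c) ^ 2 := by
        rw [eq_div_iff hv.ne']; exact e1
      have f2 : t2 j₀ = ((n:ℝ) * c + b - c) ^ 2 / (b - c) ^ 2 := by
        rw [eq_div_iff hv.ne']; exact e2
      have f3 : T2 ≤ 2 * ((n:ℝ) + 1) ^ 2 * t2 j₀ + 2 := by
        rw [f1, f2, div_le_iff₀ hv]
        have hexpand : (2 * ((n:ℝ) + 1) ^ 2 * (((n:ℝ) * c + b - c) ^ 2 / (b - c) ^ 2) + 2)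
            * (b - c) ^ 2
            = 2 * ((n:ℝ) + 1) ^ 2 * ((n:ℝ) * c + b - c) ^ 2 + 2 * (b - c) ^ 2 := by
          rw [add_mul, mul_assoc _ (_ / _), div_mul_cancel₀ _ hv.ne']
        rw [hexpand]
        linarith only [e3,
          mul_nonneg (mul_nonneg (by linarith only [hn2] : (0:ℝ) ≤ (n:ℝ) - 1)
            (by linarith only [hn2] : (0:ℝ) ≤ (n:ℝ) + 1)) (sq_nonneg ((n:ℝ) * c + b))]
      have hj₀sum : t2 j₀ ≤ A := by
        rw [hA]
        exact Finset.single_le_sum (fun i _ => ht2nonneg i) (Finset.mem_range.2 hj₀lt)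
      have hmono : 2 * ((n:ℝ) + 1) ^ 2 * t2 j₀ ≤ 2 * ((n:ℝ) + 1) ^ 2 * A :=
        mul_le_mul_of_nonneg_left hj₀sum (by positivity)
      have hexp : 2*((n:ℝ)+1)^2 * (1 + A) = 2*((n:ℝ)+1)^2 + 2*((n:ℝ)+1)^2 * A := by ring
      have hY : (2:ℝ) ≤ 2*((n:ℝ)+1)^2 := by linarith only [hn2, sq_nonneg ((n:ℝ))]
      rw [hexp]
      linarith only [f3, hmono, hY]

lemma rpow_add_le {x y p : ℝ} (hx : 0 ≤ x) (hy : 0 ≤ y) (hp : 0 ≤ p) :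
    (x + y) ^ p ≤ 2 ^ p * (x ^ p + y ^ p) := by
  rcases le_total x y with h | h
  · calc (x + y) ^ p ≤ (2 * y) ^ p := Real.rpow_le_rpow (by linarith) (by linarith) hp
      _ = 2 ^ p * y ^ p := Real.mul_rpow (by norm_num) hy
      _ ≤ 2 ^ p * (x ^ p + y ^ p) :=
        mul_le_mul_of_nonneg_left (le_add_of_nonneg_left (Real.rpow_nonneg hx p))
          (Real.rpow_nonneg (by norm_num) p)
  · calc (x + y) ^ p ≤ (2 * x) ^ p := Real.rpow_le_rpow (by linarith) (by linarith) hp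
      _ = 2 ^ p * x ^ p := Real.mul_rpow (by norm_num) hx
      _ ≤ 2 ^ p * (x ^ p + y ^ p) :=
        mul_le_mul_of_nonneg_left (le_add_of_nonneg_right (Real.rpow_nonneg hy p))
          (Real.rpow_nonneg (by norm_num) p)

lemma sum_rpow_le {s : Finset ℕ} (f : ℕ → ℝ) (hf : ∀ i ∈ s, 0 ≤ f i) {p : ℝ} (hp : 0 < p) :
    (∑ i ∈ s, f i) ^ p ≤ (s.card : ℝ) ^ p * ∑ i ∈ s, (f i) ^ p := by
  rcases s.eq_empty_or_nonempty with rfl | hne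
  · simp [Real.zero_rpow hp.ne']
  · obtain ⟨m, hm, hmax⟩ := Finset.exists_max_image s f hne
    have hsum_nonneg : 0 ≤ ∑ i ∈ s, f i := Finset.sum_nonneg hf
    have hfm : 0 ≤ f m := hf m hm
    have h1 : ∑ i ∈ s, f i ≤ (s.card : ℝ) * f m := by
      have := Finset.sum_le_card_nsmul s f (f m) (fun i hi => hmax i hi)
      simpa [nsmul_eq_mul] using this
    calc (∑ i ∈ s, f i) ^ p ≤ ((s.card : ℝ) * f m) ^ p :=
          Real.rpow_le_rpow hsum_nonneg h1 hp.le
      _ = (s.card : ℝ) ^ p * (f m) ^ p := Real.mul_rpow (by positivity) hfm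
      _ ≤ (s.card : ℝ) ^ p * ∑ i ∈ s, (f i) ^ p := by
          apply mul_le_mul_of_nonneg_left _ (Real.rpow_nonneg (by positivity) p)
          exact Finset.single_le_sum (fun i hi => Real.rpow_nonneg (hf i hi) p) hm

lemma abs_rpow_sq (t r : ℝ) : (t ^ 2) ^ (r / 2) = |t| ^ r := by
  rw [← sq_abs, ← Real.rpow_natCast |t| 2, ← Real.rpow_mul (abs_nonneg t)]
  norm_num
  rw [show (2:ℝ) * (r / 2) = r by ring]

lemma pointwise (a : ℕ → ℝ) {n : ℕ} (hn : 2 ≤ n) {r : ℝ} (hr : 0 < r) :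
    |tst a (n + 1)| ^ r ≤
      ((2 * ((n:ℝ) + 1) ^ 2) ^ (r / 2) * 2 ^ (r / 2) * ((n:ℝ) + 1) ^ (r / 2)) *
        (1 + ∑ k ∈ Finset.range (n + 1), |tst (fun j => a (drop k j)) n| ^ r) := by
  have hp : (0:ℝ) < r / 2 := by linarith
  set A := ∑ k ∈ Finset.range (n + 1), (tst (fun j => a (drop k j)) n) ^ 2 with hA
  set B := ∑ k ∈ Finset.range (n + 1), |tst (fun j => a (drop k j)) n| ^ r with hB
  have hAnn : 0 ≤ A := Finset.sum_nonneg fun k _ => sq_nonneg _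
  have hBnn : 0 ≤ B :=
    Finset.sum_nonneg fun k _ => Real.rpow_nonneg (abs_nonneg _) r
  set K1 := (2 * ((n:ℝ) + 1) ^ 2) ^ (r / 2) with hK1
  set K2 := (2:ℝ) ^ (r / 2) with hK2
  set K3 := ((n:ℝ) + 1) ^ (r / 2) with hK3
  have hK1nn : 0 ≤ K1 := Real.rpow_nonneg (by positivity) _
  have hK2nn : 0 ≤ K2 := Real.rpow_nonneg (by norm_num) _
  have hK3nn : 0 ≤ K3 := Real.rpow_nonneg (by positivity) _
  have hK3one : 1 ≤ K3 := by
    rw [hK3]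
    calc (1:ℝ) = 1 ^ (r / 2) := (Real.one_rpow _).symm
      _ ≤ ((n:ℝ) + 1) ^ (r / 2) :=
        Real.rpow_le_rpow zero_le_one
          (by have : (0:ℝ) ≤ n := Nat.cast_nonneg n; linarith) hp.le
  have hAB : A ^ (r / 2) ≤ K3 * B := by
    have h := sum_rpow_le (s := Finset.range (n + 1))
      (fun k => (tst (fun j => a (drop k j)) n) ^ 2) (fun i _ => sq_nonneg _) hp
    rw [Finset.card_range] at h
    have hcongr : ∑ k ∈ Finset.range (n + 1), ((tst (fun j => a (drop k j)) n) ^ 2) ^ (r / 2)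
        = B := by
      rw [hB]
      exact Finset.sum_congr rfl fun k _ => abs_rpow_sq _ r
    rw [hcongr] at h
    calc A ^ (r / 2) ≤ ((n + 1 : ℕ) : ℝ) ^ (r / 2) * B := h
      _ = K3 * B := by push_cast; rw [hK3]
  calc |tst a (n + 1)| ^ r = ((tst a (n + 1)) ^ 2) ^ (r / 2) := (abs_rpow_sq _ r).symm
    _ ≤ (2 * ((n:ℝ) + 1) ^ 2 * (1 + A)) ^ (r / 2) :=
        Real.rpow_le_rpow (sq_nonneg _) (key a hn) hp.le
    _ = K1 * (1 + A) ^ (r / 2) := Real.mul_rpow (by positivity) (by linarith)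
    _ ≤ K1 * (K2 * (1 + A ^ (r / 2))) := by
        apply mul_le_mul_of_nonneg_left _ hK1nn
        calc (1 + A) ^ (r / 2) ≤ 2 ^ (r / 2) * (1 ^ (r / 2) + A ^ (r / 2)) :=
              rpow_add_le zero_le_one hAnn hp.le
          _ = K2 * (1 + A ^ (r / 2)) := by rw [Real.one_rpow, hK2]
    _ ≤ K1 * (K2 * (1 + K3 * B)) := by
        apply mul_le_mul_of_nonneg_left _ hK1nn
        apply mul_le_mul_of_nonneg_left _ hK2nn
        linarith [hAB]
    _ ≤ K1 * (K2 * (K3 * (1 + B))) := by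
        apply mul_le_mul_of_nonneg_left _ hK1nn
        apply mul_le_mul_of_nonneg_left _ hK2nn
        have : (0:ℝ) ≤ K3 * B := mul_nonneg hK3nn hBnn
        nlinarith [hK3one, hBnn]
    _ = (K1 * K2 * K3) * (1 + B) := by ring

lemma measurable_tstat {Ω : Type*} [MeasurableSpace Ω] (X : ℕ → Ω → ℝ)
    (h : ∀ i, Measurable (X i)) (n : ℕ) : Measurable (Tstat X n) := by
  have hS : Measurable (Sn X n) := by
    unfold Sn; exact Finset.measurable_sum _ (fun i _ => h i)
  have hsig : Measurable (sigmaSq X n) := by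
    unfold sigmaSq
    apply Measurable.const_mul
    apply Finset.measurable_sum
    intro i _
    exact ((h i).sub (hS.div_const _)).pow_const 2
  unfold Tstat
  apply Measurable.ite (measurableSet_lt measurable_const hsig)
  · exact hS.div (measurable_const.mul (Real.continuous_sqrt.measurable.comp hsig))
  · exact measurable_const

lemma map_eq_pi {Ω : Type*} [MeasurableSpace Ω] (P : Measure Ω) [IsProbabilityMeasure P]
    (X : ℕ → Ω → ℝ) (hmeas : ∀ i, Measurable (X i))
    (hindep : iIndepFun X P)
    (hident : ∀ i, IdentDistrib (X i) (X 0) P P)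
    {m : ℕ} (e : Fin m → ℕ) (he : Function.Injective e) :
    P.map (fun ω (j : Fin m) => X (e j) ω) = Measure.pi (fun _ => P.map (X 0)) := by
  classical
  have hXe : Measurable (fun ω (j : Fin m) => X (e j) ω) :=
    measurable_pi_lambda _ (fun j => hmeas (e j))
  haveI : IsProbabilityMeasure (P.map (X 0)) :=
    Measure.isProbabilityMeasure_map (hmeas 0).aemeasurable
  refine (Measure.pi_eq ?_).symm
  intro s hs
  rw [Measure.map_apply hXe (MeasurableSet.univ_pi hs)]
  set sets : ℕ → Set ℝ := fun i => ⋂ (j : Fin m) (_ : e j = i), s j with hsets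
  have hsets_meas : ∀ i, MeasurableSet (sets i) := fun i =>
    MeasurableSet.iInter fun j => MeasurableSet.iInter fun _ => hs j
  have hsets_eq : ∀ j : Fin m, sets (e j) = s j := by
    intro j
    apply subset_antisymm
    · intro x hx
      exact Set.mem_iInter.1 (Set.mem_iInter.1 hx j) rfl
    · intro x hx
      apply Set.mem_iInter.2; intro j'
      apply Set.mem_iInter.2; intro hj'
      rw [he hj']; exact hx
  have hpre : (fun ω (j : Fin m) => X (e j) ω) ⁻¹' (Set.pi Set.univ s)
      = ⋂ i ∈ Finset.image e Finset.univ, X i ⁻¹' sets i := by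
    ext ω
    simp only [Set.mem_preimage, Set.mem_pi, Set.mem_univ, forall_true_left,
      Set.mem_iInter, Finset.mem_image, Finset.mem_univ, true_and]
    constructor
    · rintro h i ⟨j, rfl⟩
      rw [hsets_eq j]; exact h j
    · intro h j
      have := h (e j) ⟨j, rfl⟩
      rwa [hsets_eq j] at this
  rw [hpre, hindep.measure_inter_preimage_eq_mul (Finset.image e Finset.univ)
    (fun i _ => hsets_meas i),
    Finset.prod_image (fun j _ j' _ h => he h)]
  apply Finset.prod_congr rfl
  intro j _
  rw [hsets_eq j, ← Measure.map_apply (hmeas (e j)) (hs j), (hident (e j)).map_eq]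

lemma lintegral_tstat_comp {Ω : Type*} [MeasurableSpace Ω] (P : Measure Ω)
    [IsProbabilityMeasure P]
    (X : ℕ → Ω → ℝ) (hmeas : ∀ i, Measurable (X i))
    (hindep : iIndepFun X P)
    (hident : ∀ i, IdentDistrib (X i) (X 0) P P)
    (n : ℕ) {r : ℝ} (hr : 0 < r) (e : ℕ → ℕ) (he : Function.Injective e) :
    ∫⁻ ω, ENNReal.ofReal (|Tstat (fun j => X (e j)) n ω| ^ r) ∂P
      = ∫⁻ ω, ENNReal.ofReal (|Tstat X n ω| ^ r) ∂P := by
  set Y : ℕ → (Fin n → ℝ) → ℝ := fun i v => if h : i < n then v ⟨i, h⟩ else 0 with hY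
  have hYmeas : ∀ i, Measurable (Y i) := by
    intro i; rw [hY]; dsimp only; split_ifs with h
    · exact measurable_pi_apply _
    · exact measurable_const
  have hGmeas : Measurable (Tstat Y n) := measurable_tstat Y hYmeas n
  have hF : Measurable (fun v => ENNReal.ofReal (|Tstat Y n v| ^ r)) := by
    apply ENNReal.measurable_ofReal.comp
    exact (Real.continuous_rpow_const hr.le).measurable.comp hGmeas.abs
  have key1 : ∀ (e' : ℕ → ℕ), Function.Injective e' →
      ∫⁻ ω, ENNReal.ofReal (|Tstat (fun j => X (e' j)) n ω| ^ r) ∂P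
        = ∫⁻ v, ENNReal.ofReal (|Tstat Y n v| ^ r)
            ∂(Measure.pi (fun _ : Fin n => P.map (X 0))) := by
    intro e' he'
    have hinj : Function.Injective (fun j : Fin n => e' j.val) := by
      intro j j' h
      exact Fin.ext (he' h)
    rw [← map_eq_pi P X hmeas hindep hident _ hinj,
      lintegral_map hF (measurable_pi_lambda _ (fun j => hmeas (e' j.val)))]
    apply lintegral_congr
    intro ω
    have hT : Tstat (fun j => X (e' j)) n ω
        = Tstat Y n (fun j : Fin n => X (e' j.val) ω) := by
      apply tstat_congr
      intro i hi
      simp only [hY]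
      rw [dif_pos hi]
    rw [hT]
  rw [key1 e he, key1 (fun j => j) (fun a b h => h)]

end StudentAux

open StudentAux

/-- Theorem 2 (Theorem `thm-next`): for i.i.d. `X_i`, `n ≥ 2` and `r > 0`, if `E|T_n|^r`
is finite then so is `E|T_{n+1}|^r`. -/
theorem lintegral_tstat_succ_lt_top {Ω : Type*} [MeasurableSpace Ω]
    (P : Measure Ω) [IsProbabilityMeasure P]
    (X : ℕ → Ω → ℝ) (hmeas : ∀ i, Measurable (X i))
    (hindep : iIndepFun X P)
    (hident : ∀ i, IdentDistrib (X i) (X 0) P P)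
    (n : ℕ) (hn : 2 ≤ n) (r : ℝ) (hr : 0 < r)
    (hfin : (∫⁻ ω, ENNReal.ofReal (|Tstat X n ω| ^ r) ∂P) < ⊤) :
    (∫⁻ ω, ENNReal.ofReal (|Tstat X (n + 1) ω| ^ r) ∂P) < ⊤ := by
  classical
  set C : ℝ := (2 * ((n:ℝ) + 1) ^ 2) ^ (r / 2) * 2 ^ (r / 2) * ((n:ℝ) + 1) ^ (r / 2) with hC
  have hCnn : 0 ≤ C := by
    apply mul_nonneg (mul_nonneg _ _)
    · exact Real.rpow_nonneg (by positivity) _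
    · exact Real.rpow_nonneg (by positivity) _
    · exact Real.rpow_nonneg (by positivity) _
  set g : ℕ → Ω → ENNReal := fun k ω =>
    ENNReal.ofReal (|Tstat (fun j => X (drop k j)) n ω| ^ r) with hg
  have hgmeas : ∀ k, Measurable (g k) := by
    intro k
    simp only [hg]
    exact ENNReal.measurable_ofReal.comp
      ((Real.continuous_rpow_const hr.le).measurable.comp
        (measurable_tstat _ (fun j => hmeas _) n).abs)
  have hpt : ∀ ω, ENNReal.ofReal (|Tstat X (n + 1) ω| ^ r)
      ≤ ENNReal.ofReal C * (1 + ∑ k ∈ Finset.range (n + 1), g k ω) := by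
    intro ω
    have hb := pointwise (fun i => X i ω) hn hr
    have hgval : ∀ k, g k ω
        = ENNReal.ofReal (|tst (fun j => (fun i => X i ω) (drop k j)) n| ^ r) := by
      intro k
      simp only [hg]
      rw [tstat_eq_tst]
    rw [tstat_eq_tst X (n + 1) ω]
    have hsum_nonneg : 0 ≤ ∑ k ∈ Finset.range (n + 1),
        |tst (fun j => (fun i => X i ω) (drop k j)) n| ^ r :=
      Finset.sum_nonneg fun k _ => Real.rpow_nonneg (abs_nonneg _) r
    calc ENNReal.ofReal (|tst (fun i => X i ω) (n + 1)| ^ r)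
        ≤ ENNReal.ofReal (C * (1 + ∑ k ∈ Finset.range (n + 1),
            |tst (fun j => (fun i => X i ω) (drop k j)) n| ^ r)) := by
          apply ENNReal.ofReal_le_ofReal
          rw [hC]
          exact hb
      _ = ENNReal.ofReal C * (1 + ∑ k ∈ Finset.range (n + 1), g k ω) := by
          rw [ENNReal.ofReal_mul hCnn, ENNReal.ofReal_add zero_le_one hsum_nonneg,
            ENNReal.ofReal_one, ENNReal.ofReal_sum_of_nonneg
              (fun k _ => Real.rpow_nonneg (abs_nonneg _) r)]
          have hss : ∑ k ∈ Finset.range (n + 1),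
              ENNReal.ofReal (|tst (fun j => (fun i => X i ω) (drop k j)) n| ^ r)
              = ∑ k ∈ Finset.range (n + 1), g k ω :=
            Finset.sum_congr rfl fun k _ => (hgval k).symm
          rw [hss]
  have hI : ∫⁻ ω, ENNReal.ofReal (|Tstat X (n + 1) ω| ^ r) ∂P
      ≤ ENNReal.ofReal C * (1 + ∑ k ∈ Finset.range (n + 1), ∫⁻ ω, g k ω ∂P) := by
    calc ∫⁻ ω, ENNReal.ofReal (|Tstat X (n + 1) ω| ^ r) ∂P
        ≤ ∫⁻ ω, ENNReal.ofReal C * (1 + ∑ k ∈ Finset.range (n + 1), g k ω) ∂P :=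
          lintegral_mono hpt
      _ = ENNReal.ofReal C * ∫⁻ ω, (1 + ∑ k ∈ Finset.range (n + 1), g k ω) ∂P :=
          lintegral_const_mul' _ _ ENNReal.ofReal_ne_top
      _ = ENNReal.ofReal C
          * (∫⁻ _, (1 : ENNReal) ∂P + ∫⁻ ω, ∑ k ∈ Finset.range (n + 1), g k ω ∂P) := by
          rw [lintegral_add_left measurable_const]
      _ = ENNReal.ofReal C * (1 + ∑ k ∈ Finset.range (n + 1), ∫⁻ ω, g k ω ∂P) := by
          rw [lintegral_one, measure_univ, lintegral_finset_sum _ (fun k _ => hgmeas k)]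
  have hEq : ∀ k, ∫⁻ ω, g k ω ∂P = ∫⁻ ω, ENNReal.ofReal (|Tstat X n ω| ^ r) ∂P := by
    intro k
    simp only [hg]
    exact lintegral_tstat_comp P X hmeas hindep hident n hr _ (drop_injective k)
  have hsum : ∑ k ∈ Finset.range (n + 1), ∫⁻ ω, g k ω ∂P
      = ((n + 1 : ℕ) : ENNReal) * ∫⁻ ω, ENNReal.ofReal (|Tstat X n ω| ^ r) ∂P := by
    rw [Finset.sum_congr rfl (fun k _ => hEq k), Finset.sum_const, Finset.card_range,
      nsmul_eq_mul]
  apply lt_of_le_of_lt hI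
  rw [hsum]
  apply ENNReal.mul_lt_top ENNReal.ofReal_lt_top
  apply ENNReal.add_lt_top.2
  constructor
  · exact ENNReal.one_lt_top
  · exact ENNReal.mul_lt_top (ENNReal.natCast_lt_top _) hfin


end
end

section
/- Let (X_i)_{i≥1} be i.i.d. real-valued random variables, let r > 0 and n ≥ 2, and for k ≥ 2 let A_k be the event that |X_i − X_1| > 0 for some 2 ≤ i ≤ k. Then E(|X_1|^r · min_{2≤i≤n+1} |X_i − X_1|^{−r} · 1_{A_{n+1}}) ≤ 2 · E(|X_1|^r · min_{2≤i≤n} |X_i − X_1|^{−r} · 1_{A_n}). -/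
open MeasureTheory ProbabilityTheory Filter

noncomputable section

/-- For i.i.d. `X_i`, `r > 0` and `n ≥ 2`, with `A_k = {|X_i − X_1| > 0 for some 2 ≤ i ≤ k}`:
`E(|X_1|^r · min_{2≤i≤n+1} |X_i − X_1|^{−r} · 1_{A_{n+1}})
  ≤ 2 · E(|X_1|^r · min_{2≤i≤n} |X_i − X_1|^{−r} · 1_{A_n})`. -/
theorem expectation_min_succ_le_two_mul {Ω : Type*} [MeasurableSpace Ω]
    (P : Measure Ω) [IsProbabilityMeasure P]
    (X : ℕ → Ω → ℝ) (hmeas : ∀ i, Measurable (X i))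
    (hindep : iIndepFun X P)
    (hident : ∀ i, IdentDistrib (X i) (X 0) P P)
    (n : ℕ) (hn : 2 ≤ n) (r : ℝ) (hr : 0 < r) :
    (∫⁻ ω, Set.indicator {ω | ∃ i ∈ Finset.Ico 1 (n + 1), X i ω ≠ X 0 ω}
        (fun ω => ENNReal.ofReal (|X 0 ω| ^ r) *
          ⨅ i ∈ Finset.Ico 1 (n + 1), (ENNReal.ofReal |X i ω - X 0 ω|) ^ (-r)) ω ∂P) ≤
      2 * ∫⁻ ω, Set.indicator {ω | ∃ i ∈ Finset.Ico 1 n, X i ω ≠ X 0 ω}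
        (fun ω => ENNReal.ofReal (|X 0 ω| ^ r) *
          ⨅ i ∈ Finset.Ico 1 n, (ENNReal.ofReal |X i ω - X 0 ω|) ^ (-r)) ω ∂P := by
  classical
  -- the common law of the `X i`
  set μ : Measure ℝ := P.map (X 0) with hμdef
  haveI hprob : IsProbabilityMeasure μ := Measure.isProbabilityMeasure_map (hmeas 0).aemeasurable
  -- the random vector
  set Y : Ω → (Fin (n + 1) → ℝ) := fun ω i => X i ω with hYdef
  have hY : Measurable Y := measurable_pi_lambda _ fun i => hmeas i
  have hXlaw : ∀ (i : ℕ) (t : Set ℝ), MeasurableSet t → P (X i ⁻¹' t) = μ t := by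
    intro i t ht
    rw [hμdef, ← (hident i).map_eq, Measure.map_apply (hmeas i) ht]
  -- the law of the vector is the product measure
  have hmap : P.map Y = Measure.pi (fun _ : Fin (n + 1) => μ) := by
    refine (Measure.pi_eq (μ := fun _ : Fin (n + 1) => μ) fun s hs => ?_).symm
    rw [Measure.map_apply hY (MeasurableSet.univ_pi hs)]
    set s' : ℕ → Set ℝ := fun i => if h : i < n + 1 then s ⟨i, h⟩ else Set.univ with hs'def
    have hpre : Y ⁻¹' (Set.pi Set.univ s) = ⋂ i ∈ Finset.range (n + 1), X i ⁻¹' s' i := by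
      ext ω
      simp only [Set.mem_preimage, Set.mem_pi, Set.mem_univ, forall_true_left,
        Set.mem_iInter, Finset.mem_range, hYdef, hs'def]
      constructor
      · intro h i hi
        simp only [dif_pos hi]
        exact h ⟨i, hi⟩
      · intro h j
        have hj := h j.val j.isLt
        simpa only [dif_pos j.isLt] using hj
    have hms' : ∀ i, MeasurableSet (s' i) := by
      intro i
      rw [hs'def]
      dsimp only
      split
      · exact hs _
      · exact MeasurableSet.univ
    rw [hpre, hindep.meas_biInter fun i _ => ⟨s' i, hms' i, rfl⟩]
    rw [← Fin.prod_univ_eq_prod_range (fun i => P (X i ⁻¹' s' i)) (n + 1)]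
    refine Finset.prod_congr rfl fun j _ => ?_
    have hsj : s' j.val = s j := by
      rw [hs'def]
      simp only [dif_pos j.isLt, Fin.eta]
    rw [hsj]
    exact hXlaw j (s j) (hs j)
  -- the two special indices
  have hn1lt : n - 1 < n + 1 := by omega
  set a : Fin (n + 1) := ⟨n - 1, hn1lt⟩ with hadef
  set b : Fin (n + 1) := Fin.last n with hbdef
  have haval : (a : ℕ) = n - 1 := rfl
  have hbval : (b : ℕ) = n := rfl
  have h0a : (0 : Fin (n + 1)) ≠ a := by
    intro h
    have := congrArg Fin.val h
    simp only [Fin.val_zero, haval] at this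
    omega
  have h0b : (0 : Fin (n + 1)) ≠ b := by
    intro h
    have := congrArg Fin.val h
    simp only [Fin.val_zero, hbval] at this
    omega
  -- the functions on the product space
  set SΦ : Set (Fin (n + 1) → ℝ) :=
    {x | (∀ i : Fin (n + 1), 1 ≤ (i : ℕ) → (i : ℕ) < n → x i = x 0) ∧ x b ≠ x 0} with hSΦdef
  set fΦ : (Fin (n + 1) → ℝ) → ENNReal :=
    fun x => ENNReal.ofReal (|x 0| ^ r) * (ENNReal.ofReal |x b - x 0|) ^ (-r) with hfΦdef
  set SΨ : Set (Fin (n + 1) → ℝ) :=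
    {x | (∀ i : Fin (n + 1), 1 ≤ (i : ℕ) → (i : ℕ) < n - 1 → x i = x 0) ∧ x a ≠ x 0 ∧ x b = x 0}
    with hSΨdef
  set fΨ : (Fin (n + 1) → ℝ) → ENNReal :=
    fun x => ENNReal.ofReal (|x 0| ^ r) * (ENNReal.ofReal |x a - x 0|) ^ (-r) with hfΨdef
  have hme : ∀ i j : Fin (n + 1), MeasurableSet {x : Fin (n + 1) → ℝ | x i = x j} := fun i j =>
    measurableSet_eq_fun (measurable_pi_apply i) (measurable_pi_apply j)
  have hmSΦ : MeasurableSet SΦ := by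
    have : SΦ = (⋂ (i : Fin (n + 1)) (_ : 1 ≤ (i : ℕ)) (_ : (i : ℕ) < n),
        {x : Fin (n + 1) → ℝ | x i = x 0}) ∩ {x : Fin (n + 1) → ℝ | x b = x 0}ᶜ := by
      ext x
      simp only [hSΦdef, Set.mem_setOf_eq, Set.mem_inter_iff, Set.mem_iInter, Set.mem_compl_iff]
    rw [this]
    exact (MeasurableSet.iInter fun i => MeasurableSet.iInter fun _ =>
      MeasurableSet.iInter fun _ => hme i 0).inter (hme b 0).compl
  have hmSΨ : MeasurableSet SΨ := by
    have : SΨ = (⋂ (i : Fin (n + 1)) (_ : 1 ≤ (i : ℕ)) (_ : (i : ℕ) < n - 1),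
        {x : Fin (n + 1) → ℝ | x i = x 0}) ∩
        ({x : Fin (n + 1) → ℝ | x a = x 0}ᶜ ∩ {x : Fin (n + 1) → ℝ | x b = x 0}) := by
      ext x
      simp only [hSΨdef, Set.mem_setOf_eq, Set.mem_inter_iff, Set.mem_iInter, Set.mem_compl_iff]
    rw [this]
    exact (MeasurableSet.iInter fun i => MeasurableSet.iInter fun _ =>
      MeasurableSet.iInter fun _ => hme i 0).inter ((hme a 0).compl.inter (hme b 0))
  have hmfΦ : Measurable fΦ :=
    (((measurable_pi_apply 0).abs.pow_const r).ennreal_ofReal).mul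
      ((((measurable_pi_apply b).sub (measurable_pi_apply 0)).abs.ennreal_ofReal).pow_const (-r))
  have hmfΨ : Measurable fΨ :=
    (((measurable_pi_apply 0).abs.pow_const r).ennreal_ofReal).mul
      ((((measurable_pi_apply a).sub (measurable_pi_apply 0)).abs.ennreal_ofReal).pow_const (-r))
  have hΦ : Measurable (SΦ.indicator fΦ) := hmfΦ.indicator hmSΦ
  have hΨ : Measurable (SΨ.indicator fΨ) := hmfΨ.indicator hmSΨ
  -- the sets and functions on Ω
  set C : Set Ω := {ω | (∀ i ∈ Finset.Ico 1 n, X i ω = X 0 ω) ∧ X n ω ≠ X 0 ω} with hCdef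
  set Gf : Ω → ENNReal :=
    fun ω => ENNReal.ofReal (|X 0 ω| ^ r) * (ENNReal.ofReal |X n ω - X 0 ω|) ^ (-r) with hGdef
  set D : Set Ω := {ω | (∀ i ∈ Finset.Ico 1 (n - 1), X i ω = X 0 ω) ∧
    X (n - 1) ω ≠ X 0 ω ∧ X n ω = X 0 ω} with hDdef
  set Hf : Ω → ENNReal :=
    fun ω => ENNReal.ofReal (|X 0 ω| ^ r) * (ENNReal.ofReal |X (n - 1) ω - X 0 ω|) ^ (-r) with hHdef
  -- identification of the pulled-back functions
  have hYval : ∀ (ω : Ω) (j : Fin (n + 1)), Y ω j = X (j : ℕ) ω := fun ω j => rfl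
  have hY0 : ∀ ω : Ω, Y ω 0 = X 0 ω := by
    intro ω; rw [hYval]; norm_num
  have hYb : ∀ ω : Ω, Y ω b = X n ω := by
    intro ω; rw [hYval, hbval]
  have hYa : ∀ ω : Ω, Y ω a = X (n - 1) ω := by
    intro ω; rw [hYval, haval]
  have hΦY : ∀ ω, SΦ.indicator fΦ (Y ω) = C.indicator Gf ω := by
    intro ω
    have hmem : Y ω ∈ SΦ ↔ ω ∈ C := by
      simp only [hSΦdef, Set.mem_setOf_eq, hCdef, hY0, hYb]
      constructor
      · rintro ⟨h1, h2⟩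
        refine ⟨fun i hi => ?_, h2⟩
        obtain ⟨hi1, hi2⟩ := Finset.mem_Ico.mp hi
        have := h1 ⟨i, by omega⟩ hi1 hi2
        rwa [hYval] at this
      · rintro ⟨h1, h2⟩
        refine ⟨fun i hi1 hi2 => ?_, h2⟩
        rw [hYval]
        exact h1 (i : ℕ) (Finset.mem_Ico.mpr ⟨hi1, hi2⟩)
    by_cases hc : ω ∈ C
    · rw [Set.indicator_of_mem hc, Set.indicator_of_mem (hmem.mpr hc), hfΦdef, hGdef]
      simp only [hY0, hYb]
    · rw [Set.indicator_of_notMem hc, Set.indicator_of_notMem (fun h => hc (hmem.mp h))]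
  have hΨY : ∀ ω, SΨ.indicator fΨ (Y ω) = D.indicator Hf ω := by
    intro ω
    have hmem : Y ω ∈ SΨ ↔ ω ∈ D := by
      simp only [hSΨdef, Set.mem_setOf_eq, hDdef, hY0, hYa, hYb]
      constructor
      · rintro ⟨h1, h2, h3⟩
        refine ⟨fun i hi => ?_, h2, h3⟩
        obtain ⟨hi1, hi2⟩ := Finset.mem_Ico.mp hi
        have := h1 ⟨i, by omega⟩ hi1 hi2
        rwa [hYval] at this
      · rintro ⟨h1, h2, h3⟩
        refine ⟨fun i hi1 hi2 => ?_, h2, h3⟩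
        rw [hYval]
        exact h1 (i : ℕ) (Finset.mem_Ico.mpr ⟨hi1, hi2⟩)
    by_cases hc : ω ∈ D
    · rw [Set.indicator_of_mem hc, Set.indicator_of_mem (hmem.mpr hc), hfΨdef, hHdef]
      simp only [hY0, hYa]
    · rw [Set.indicator_of_notMem hc, Set.indicator_of_notMem (fun h => hc (hmem.mp h))]
  -- the swap
  set T := MeasurableEquiv.piCongrLeft (fun _ : Fin (n + 1) => ℝ) (Equiv.swap a b) with hTdef
  have hTx : ∀ (x : Fin (n + 1) → ℝ) (j : Fin (n + 1)), T x j = x (Equiv.swap a b j) := by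
    intro x j
    have h1 := MeasurableEquiv.piCongrLeft_apply_apply (β := fun _ : Fin (n + 1) => ℝ)
      (Equiv.swap a b) x (Equiv.swap a b j)
    rwa [Equiv.swap_apply_self] at h1
  have hΦT : ∀ x, SΦ.indicator fΦ (T x) = SΨ.indicator fΨ x := by
    intro x
    have hTx' : T x = fun j => x (Equiv.swap a b j) := funext (hTx x)
    have hs0 : Equiv.swap a b 0 = 0 := Equiv.swap_apply_of_ne_of_ne h0a h0b
    have hmem : T x ∈ SΦ ↔ x ∈ SΨ := by
      rw [hTx']
      simp only [hSΦdef, hSΨdef, Set.mem_setOf_eq, hs0, Equiv.swap_apply_right]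
      constructor
      · rintro ⟨h1, h2⟩
        refine ⟨fun i hi1 hi2 => ?_, h2, ?_⟩
        · have hia : i ≠ a := by
            intro h; rw [h, haval] at hi2; omega
          have hib : i ≠ b := by
            intro h; rw [h, hbval] at hi2; omega
          have := h1 i hi1 (by omega)
          rwa [Equiv.swap_apply_of_ne_of_ne hia hib] at this
        · have := h1 a (by rw [haval]; omega) (by rw [haval]; omega)
          rwa [Equiv.swap_apply_left] at this
      · rintro ⟨h1, h2, h3⟩
        refine ⟨fun i hi1 hi2 => ?_, h2⟩
        by_cases hia : i = a
        · rw [hia, Equiv.swap_apply_left]; exact h3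
        · have hib : i ≠ b := by
            intro h; rw [h, hbval] at hi2; omega
          rw [Equiv.swap_apply_of_ne_of_ne hia hib]
          have hivn : (i : ℕ) ≠ n - 1 := by
            intro h; exact hia (Fin.ext (by rw [h, haval]))
          exact h1 i hi1 (by omega)
    by_cases hc : x ∈ SΨ
    · rw [Set.indicator_of_mem hc, Set.indicator_of_mem (hmem.mpr hc), hfΦdef, hfΨdef, hTx']
      simp only [hs0, Equiv.swap_apply_right]
    · rw [Set.indicator_of_notMem hc, Set.indicator_of_notMem (fun h => hc (hmem.mp h))]
  -- the exchange identity
  have hIC : (∫⁻ ω, C.indicator Gf ω ∂P) = ∫⁻ ω, D.indicator Hf ω ∂P := by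
    have h1 : (∫⁻ ω, C.indicator Gf ω ∂P)
        = ∫⁻ x, SΦ.indicator fΦ x ∂(Measure.pi fun _ : Fin (n + 1) => μ) := by
      rw [← hmap, lintegral_map hΦ hY]
      exact lintegral_congr fun ω => (hΦY ω).symm
    have h2 : (∫⁻ ω, D.indicator Hf ω ∂P)
        = ∫⁻ x, SΨ.indicator fΨ x ∂(Measure.pi fun _ : Fin (n + 1) => μ) := by
      rw [← hmap, lintegral_map hΨ hY]
      exact lintegral_congr fun ω => (hΨY ω).symm
    rw [h1, h2,
      ← (measurePreserving_piCongrLeft (fun _ : Fin (n + 1) => μ) (Equiv.swap a b)).lintegral_comp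
        hΦ]
    exact lintegral_congr fun x => hΦT x
  -- measurability of the right-hand integrand
  have hA : ∀ k : ℕ, MeasurableSet {ω | ∃ i ∈ Finset.Ico 1 k, X i ω ≠ X 0 ω} := by
    intro k
    have : {ω | ∃ i ∈ Finset.Ico 1 k, X i ω ≠ X 0 ω}
        = ⋃ i ∈ Finset.Ico 1 k, {ω | X i ω ≠ X 0 ω} := by
      ext ω; simp
    rw [this]
    exact (Finset.Ico 1 k).measurableSet_biUnion fun i _ =>
      (measurableSet_eq_fun (hmeas i) (hmeas 0)).compl
  have hF : Measurable (fun ω => ENNReal.ofReal (|X 0 ω| ^ r) *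
      ⨅ i ∈ Finset.Ico 1 n, (ENNReal.ofReal |X i ω - X 0 ω|) ^ (-r)) := by
    refine (((hmeas 0).abs.pow_const r).ennreal_ofReal).mul ?_
    exact Measurable.iInf fun i => Measurable.iInf fun _ =>
      (((hmeas i).sub (hmeas 0)).abs.ennreal_ofReal).pow_const (-r)
  have hmRHS : Measurable (Set.indicator {ω | ∃ i ∈ Finset.Ico 1 n, X i ω ≠ X 0 ω}
      (fun ω => ENNReal.ofReal (|X 0 ω| ^ r) *
        ⨅ i ∈ Finset.Ico 1 n, (ENNReal.ofReal |X i ω - X 0 ω|) ^ (-r))) :=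
    hF.indicator (hA n)
  -- pointwise bound
  have keyA : ∀ ω, Set.indicator {ω | ∃ i ∈ Finset.Ico 1 (n + 1), X i ω ≠ X 0 ω}
      (fun ω => ENNReal.ofReal (|X 0 ω| ^ r) *
        ⨅ i ∈ Finset.Ico 1 (n + 1), (ENNReal.ofReal |X i ω - X 0 ω|) ^ (-r)) ω
      ≤ Set.indicator {ω | ∃ i ∈ Finset.Ico 1 n, X i ω ≠ X 0 ω}
      (fun ω => ENNReal.ofReal (|X 0 ω| ^ r) *
        ⨅ i ∈ Finset.Ico 1 n, (ENNReal.ofReal |X i ω - X 0 ω|) ^ (-r)) ω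
      + C.indicator Gf ω := by
    intro ω
    by_cases h1 : ω ∈ {ω | ∃ i ∈ Finset.Ico 1 n, X i ω ≠ X 0 ω}
    · have h2 : ω ∈ {ω | ∃ i ∈ Finset.Ico 1 (n + 1), X i ω ≠ X 0 ω} := by
        obtain ⟨i, hi, hne⟩ := h1
        obtain ⟨hi1, hi2⟩ := Finset.mem_Ico.mp hi
        exact ⟨i, Finset.mem_Ico.mpr ⟨hi1, by omega⟩, hne⟩
      rw [Set.indicator_of_mem h2, Set.indicator_of_mem h1]
      refine le_trans (mul_le_mul_right ?_ _) (self_le_add_right _ _)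
      refine biInf_mono fun i hi => ?_
      obtain ⟨hi1, hi2⟩ := Finset.mem_Ico.mp hi
      exact Finset.mem_Ico.mpr ⟨hi1, by omega⟩
    · rw [Set.indicator_of_notMem h1, zero_add]
      by_cases h2 : ω ∈ {ω | ∃ i ∈ Finset.Ico 1 (n + 1), X i ω ≠ X 0 ω}
      · have h1' : ∀ i ∈ Finset.Ico 1 n, X i ω = X 0 ω := by
          intro i hi
          by_contra hne
          exact h1 ⟨i, hi, hne⟩
        have hC : ω ∈ C := by
          obtain ⟨i, hi, hne⟩ := h2
          obtain ⟨hi1, hi2⟩ := Finset.mem_Ico.mp hi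
          have hin : i = n := by
            by_contra hin
            exact hne (h1' i (Finset.mem_Ico.mpr ⟨hi1, by omega⟩))
          rw [hCdef]
          exact ⟨h1', by rw [← hin]; exact hne⟩
        rw [Set.indicator_of_mem h2, Set.indicator_of_mem hC, hGdef]
        exact mul_le_mul_right (iInf₂_le n (Finset.mem_Ico.mpr ⟨by omega, by omega⟩)) _
      · rw [Set.indicator_of_notMem h2]
        exact zero_le
  -- pointwise bound for the exchanged term
  have keyC : ∀ ω, D.indicator Hf ω ≤ Set.indicator {ω | ∃ i ∈ Finset.Ico 1 n, X i ω ≠ X 0 ω}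
      (fun ω => ENNReal.ofReal (|X 0 ω| ^ r) *
        ⨅ i ∈ Finset.Ico 1 n, (ENNReal.ofReal |X i ω - X 0 ω|) ^ (-r)) ω := by
    intro ω
    by_cases hD : ω ∈ D
    · obtain ⟨hd1, hd2, hd3⟩ := hD
      have hAn : ω ∈ {ω | ∃ i ∈ Finset.Ico 1 n, X i ω ≠ X 0 ω} :=
        ⟨n - 1, Finset.mem_Ico.mpr ⟨by omega, by omega⟩, hd2⟩
      rw [Set.indicator_of_mem (show ω ∈ D from ⟨hd1, hd2, hd3⟩), Set.indicator_of_mem hAn,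
        hHdef]
      refine mul_le_mul_right (le_iInf₂ fun i hi => ?_) _
      obtain ⟨hi1, hi2⟩ := Finset.mem_Ico.mp hi
      by_cases hin : i = n - 1
      · rw [hin]
      · have hXi : X i ω = X 0 ω := hd1 i (Finset.mem_Ico.mpr ⟨hi1, by omega⟩)
        rw [hXi, sub_self, abs_zero, ENNReal.ofReal_zero,
          ENNReal.zero_rpow_of_neg (by linarith)]
        exact le_top
    · rw [Set.indicator_of_notMem hD]
      exact zero_le
  -- assemble
  calc (∫⁻ ω, Set.indicator {ω | ∃ i ∈ Finset.Ico 1 (n + 1), X i ω ≠ X 0 ω}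
        (fun ω => ENNReal.ofReal (|X 0 ω| ^ r) *
          ⨅ i ∈ Finset.Ico 1 (n + 1), (ENNReal.ofReal |X i ω - X 0 ω|) ^ (-r)) ω ∂P)
      ≤ ∫⁻ ω, (Set.indicator {ω | ∃ i ∈ Finset.Ico 1 n, X i ω ≠ X 0 ω}
        (fun ω => ENNReal.ofReal (|X 0 ω| ^ r) *
          ⨅ i ∈ Finset.Ico 1 n, (ENNReal.ofReal |X i ω - X 0 ω|) ^ (-r)) ω
        + C.indicator Gf ω) ∂P := lintegral_mono keyA
    _ = (∫⁻ ω, Set.indicator {ω | ∃ i ∈ Finset.Ico 1 n, X i ω ≠ X 0 ω}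
        (fun ω => ENNReal.ofReal (|X 0 ω| ^ r) *
          ⨅ i ∈ Finset.Ico 1 n, (ENNReal.ofReal |X i ω - X 0 ω|) ^ (-r)) ω ∂P)
        + ∫⁻ ω, C.indicator Gf ω ∂P := lintegral_add_left hmRHS _
    _ = (∫⁻ ω, Set.indicator {ω | ∃ i ∈ Finset.Ico 1 n, X i ω ≠ X 0 ω}
        (fun ω => ENNReal.ofReal (|X 0 ω| ^ r) *
          ⨅ i ∈ Finset.Ico 1 n, (ENNReal.ofReal |X i ω - X 0 ω|) ^ (-r)) ω ∂P)
        + ∫⁻ ω, D.indicator Hf ω ∂P := by rw [hIC]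
    _ ≤ (∫⁻ ω, Set.indicator {ω | ∃ i ∈ Finset.Ico 1 n, X i ω ≠ X 0 ω}
        (fun ω => ENNReal.ofReal (|X 0 ω| ^ r) *
          ⨅ i ∈ Finset.Ico 1 n, (ENNReal.ofReal |X i ω - X 0 ω|) ^ (-r)) ω ∂P)
        + ∫⁻ ω, Set.indicator {ω | ∃ i ∈ Finset.Ico 1 n, X i ω ≠ X 0 ω}
        (fun ω => ENNReal.ofReal (|X 0 ω| ^ r) *
          ⨅ i ∈ Finset.Ico 1 n, (ENNReal.ofReal |X i ω - X 0 ω|) ^ (-r)) ω ∂P :=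
        add_le_add_right (lintegral_mono keyC) _
    _ = 2 * ∫⁻ ω, Set.indicator {ω | ∃ i ∈ Finset.Ico 1 n, X i ω ≠ X 0 ω}
        (fun ω => ENNReal.ofReal (|X 0 ω| ^ r) *
          ⨅ i ∈ Finset.Ico 1 n, (ENNReal.ofReal |X i ω - X 0 ω|) ^ (-r)) ω ∂P :=
        (two_mul _).symm

end
end

section
/- Assume the common distribution F of the X_i decomposes as F = F_d + F_c with F_d a discrete measure and F_c a continuous (atomless) measure, and assume F_c is not identically zero. Then for every n ≥ 2 and every r ≥ n − 1, E|T_n|^r = ∞; that is, r < n − 1 is necessary for finiteness of E|T_n|^r. -/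
open MeasureTheory ProbabilityTheory Filter

noncomputable section

lemma measurable_tstat {Ω : Type*} [MeasurableSpace Ω] (X : ℕ → Ω → ℝ)
    (hmeas : ∀ i, Measurable (X i)) (n : ℕ) : Measurable (Tstat X n) := by
  have hS : Measurable (Sn X n) := Finset.measurable_sum _ fun i _ => hmeas i
  have hσ : Measurable (sigmaSq X n) := by
    apply Measurable.const_mul
    exact Finset.measurable_sum _ fun i _ => ((hmeas i).sub (hS.div_const _)).pow measurable_const
  unfold Tstat
  exact Measurable.ite (measurableSet_lt measurable_const hσ)
    (hS.div ((measurable_const.mul hσ.sqrt))) measurable_const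

lemma tstat_large {Ω : Type*} (X : ℕ → Ω → ℝ) (n : ℕ) (hn : 2 ≤ n) (c δ L : ℝ)
    (hδ : 0 < δ) (hδL : δ ≤ L)
    (hI : ∀ x ∈ Set.Ico c (c + δ), L ≤ |x|) (ω : Ω)
    (hmem : ∀ i < n, X i ω ∈ Set.Ico c (c + δ))
    (hne : X 0 ω ≠ X 1 ω) : L / δ ≤ |Tstat X n ω| := by
  have hL : 0 < L := lt_of_lt_of_le hδ hδL
  have hnR : (0:ℝ) < n := by positivity
  have hn1 : (0:ℝ) < (n:ℝ) - 1 := by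
    have : (2:ℝ) ≤ n := by exact_mod_cast hn
    linarith
  -- dichotomy of signs
  have hdiff : ∀ i < n, ∀ j < n, X i ω - X j ω < δ := by
    intro i hi j hj
    have h1 := hmem i hi
    have h2 := hmem j hj
    simp only [Set.mem_Ico] at h1 h2
    linarith
  have hsign : (∀ i < n, L ≤ X i ω) ∨ (∀ i < n, X i ω ≤ -L) := by
    have h0 := hI _ (hmem 0 (by omega))
    rcases abs_le' .. |>.mp (le_refl |X 0 ω|) with _
    rcases le_abs'.mp h0 with h0' | h0'
    · -- X 0 ω ≤ -L : all ≤ -L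
      right
      intro i hi
      rcases le_abs'.mp (hI _ (hmem i hi)) with h | h
      · exact h
      · exfalso
        have := hdiff i hi 0 (by omega)
        linarith
    · left
      intro i hi
      rcases le_abs'.mp (hI _ (hmem i hi)) with h | h
      · exfalso
        have := hdiff 0 (by omega) i hi
        linarith
      · exact h
  -- |S| ≥ n L
  have hcard : (Finset.range n).card = n := Finset.card_range n
  have hS : (n:ℝ) * L ≤ |Sn X n ω| := by
    rcases hsign with h | h
    · have : (n:ℝ) * L ≤ Sn X n ω := by
        calc (n:ℝ) * L = ∑ _i ∈ Finset.range n, L := by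
              rw [Finset.sum_const, hcard, nsmul_eq_mul]
          _ ≤ ∑ i ∈ Finset.range n, X i ω :=
              Finset.sum_le_sum fun i hi => h i (Finset.mem_range.mp hi)
      exact this.trans (le_abs_self _)
    · have : Sn X n ω ≤ (n:ℝ) * (-L) := by
        calc (∑ i ∈ Finset.range n, X i ω) ≤ ∑ _i ∈ Finset.range n, (-L) :=
              Finset.sum_le_sum fun i hi => h i (Finset.mem_range.mp hi)
          _ = (n:ℝ) * (-L) := by rw [Finset.sum_const, hcard, nsmul_eq_mul]
      have := neg_le_abs (Sn X n ω)
      nlinarith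
  -- mean in interval
  have hmean : Sn X n ω / n ∈ Set.Ico c (c + δ) := by
    constructor
    · rw [le_div_iff₀ hnR]
      calc c * n = ∑ _i ∈ Finset.range n, c := by rw [Finset.sum_const, hcard, nsmul_eq_mul]; ring
        _ ≤ Sn X n ω := Finset.sum_le_sum fun i hi => (hmem i (Finset.mem_range.mp hi)).1
    · rw [div_lt_iff₀ hnR]
      calc Sn X n ω < ∑ _i ∈ Finset.range n, (c + δ) := by
            apply Finset.sum_lt_sum_of_nonempty
            · exact Finset.nonempty_range_iff.mpr (by omega)
            · intro i hi; exact (hmem i (Finset.mem_range.mp hi)).2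
        _ = (c + δ) * n := by rw [Finset.sum_const, hcard, nsmul_eq_mul]; ring
  -- sum of squares bound
  have hsq : ∀ i < n, (X i ω - Sn X n ω / n) ^ 2 ≤ δ ^ 2 := by
    intro i hi
    have h1 := hmem i hi
    simp only [Set.mem_Ico] at h1
    have h2 := hmean
    simp only [Set.mem_Ico] at h2
    nlinarith
  have hsum : ∑ i ∈ Finset.range n, (X i ω - Sn X n ω / n) ^ 2 ≤ n * δ ^ 2 := by
    calc (∑ i ∈ Finset.range n, (X i ω - Sn X n ω / n) ^ 2)
        ≤ ∑ _i ∈ Finset.range n, δ ^ 2 :=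
          Finset.sum_le_sum fun i hi => hsq i (Finset.mem_range.mp hi)
      _ = n * δ ^ 2 := by rw [Finset.sum_const, hcard, nsmul_eq_mul]
  -- sigmaSq bounds
  have hσub : sigmaSq X n ω ≤ 2 * δ ^ 2 := by
    unfold sigmaSq
    rw [div_mul_eq_mul_div, one_mul, div_le_iff₀ hn1]
    have hn2 : (n:ℝ) ≤ 2 * ((n:ℝ) - 1) := by
      have : (2:ℝ) ≤ n := by exact_mod_cast hn
      linarith
    nlinarith [hsum, sq_nonneg δ]
  have hσpos : 0 < sigmaSq X n ω := by
    rcases lt_or_ge 0 (sigmaSq X n ω) with h | h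
    · exact h
    · exfalso
      have hinv : 0 < 1 / ((n:ℝ) - 1) := by positivity
      have hsum0 : ∑ i ∈ Finset.range n, (X i ω - Sn X n ω / n) ^ 2 ≤ 0 := by
        unfold sigmaSq at h
        rcases le_or_gt (∑ i ∈ Finset.range n, (X i ω - Sn X n ω / n) ^ 2) 0 with hs | hs
        · exact hs
        · exact absurd h (not_le.mpr (mul_pos hinv hs))
      have heach := (Finset.sum_eq_zero_iff_of_nonneg
        (fun i _ => sq_nonneg (X i ω - Sn X n ω / n))).mp
        (le_antisymm hsum0 (Finset.sum_nonneg fun i _ => sq_nonneg _))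
      have h0 := heach 0 (Finset.mem_range.mpr (by omega))
      have h1 := heach 1 (Finset.mem_range.mpr (by omega))
      have h0' : X 0 ω = Sn X n ω / n := by nlinarith [sq_nonneg (X 0 ω - Sn X n ω / n)]
      have h1' : X 1 ω = Sn X n ω / n := by nlinarith [sq_nonneg (X 1 ω - Sn X n ω / n)]
      exact hne (h0'.trans h1'.symm)
  -- denominator bound
  have hden : Real.sqrt n * Real.sqrt (sigmaSq X n ω) ≤ n * δ := by
    have h1 : Real.sqrt (sigmaSq X n ω) ≤ Real.sqrt 2 * δ := by
      calc Real.sqrt (sigmaSq X n ω) ≤ Real.sqrt (2 * δ ^ 2) := Real.sqrt_le_sqrt hσub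
        _ = Real.sqrt 2 * δ := by
            rw [Real.sqrt_mul (by norm_num), Real.sqrt_sq hδ.le]
    calc Real.sqrt n * Real.sqrt (sigmaSq X n ω) ≤ Real.sqrt n * (Real.sqrt 2 * δ) := by
          apply mul_le_mul_of_nonneg_left h1 (Real.sqrt_nonneg _)
      _ = Real.sqrt (2 * n) * δ := by
          rw [Real.sqrt_mul (by norm_num), mul_comm (Real.sqrt 2) (Real.sqrt n)]; ring
      _ ≤ n * δ := by
          apply mul_le_mul_of_nonneg_right _ hδ.le
          have h2n : (2:ℝ) ≤ n := by exact_mod_cast hn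
          have := Real.sqrt_le_sqrt (show 2 * (n:ℝ) ≤ (n:ℝ)^2 by nlinarith)
          simpa [Real.sqrt_sq hnR.le] using this
  have hdenpos : 0 < Real.sqrt n * Real.sqrt (sigmaSq X n ω) :=
    mul_pos (Real.sqrt_pos.mpr hnR) (Real.sqrt_pos.mpr hσpos)
  rw [Tstat, if_pos hσpos, abs_div, abs_of_pos hdenpos]
  calc L / δ = (n * L) / (n * δ) := by
        rw [mul_div_mul_left _ _ (ne_of_gt hnR)]
    _ ≤ |Sn X n ω| / (Real.sqrt n * Real.sqrt (sigmaSq X n ω)) :=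
        div_le_div₀ (abs_nonneg _) hS hdenpos hden

lemma event_bound {Ω : Type*} [MeasurableSpace Ω] (P : Measure Ω) [IsProbabilityMeasure P]
    (X : ℕ → Ω → ℝ) (hmeas : ∀ i, Measurable (X i))
    (hindep : iIndepFun X P)
    (F Fc : Measure ℝ) (hdist : ∀ i, P.map (X i) = F)
    (hle : Fc ≤ F) (hFc : ∀ x : ℝ, Fc {x} = 0)
    (n : ℕ) (hn : 2 ≤ n) (I : Set ℝ) (hI : MeasurableSet I) :
    Fc I ^ n ≤ P {ω | (∀ i < n, X i ω ∈ I) ∧ X 0 ω ≠ X 1 ω} := by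
  classical
  set s : Set (ℝ × ℝ) := (I ×ˢ I) \ {p : ℝ × ℝ | p.1 = p.2} with hs_def
  have hs : MeasurableSet s :=
    (hI.prod hI).diff (measurableSet_eq_fun measurable_fst measurable_snd)
  set A : Set Ω := (fun ω => (X 0 ω, X 1 ω)) ⁻¹' s with hA_def
  set B : Set Ω := ⋂ i ∈ Finset.Ico 2 n, X i ⁻¹' I with hB_def
  -- A ∩ B is inside the target event
  have hsub : A ∩ B ⊆ {ω | (∀ i < n, X i ω ∈ I) ∧ X 0 ω ≠ X 1 ω} := by
    rintro ω ⟨hA, hB⟩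
    simp only [hA_def, Set.mem_preimage, hs_def, Set.mem_diff, Set.mem_prod,
      Set.mem_setOf_eq] at hA
    simp only [hB_def, Set.mem_iInter, Set.mem_preimage, Finset.mem_Ico] at hB
    refine ⟨fun i hi => ?_, hA.2⟩
    rcases Nat.lt_or_ge i 2 with h2 | h2
    · interval_cases i
      · exact hA.1.1
      · exact hA.1.2
    · exact hB i ⟨h2, hi⟩
  -- independence of the pair (X 0, X 1) and the rest
  have hdisj : Disjoint ({0, 1} : Finset ℕ) (Finset.Ico 2 n) := by
    rw [Finset.disjoint_left]
    intro a ha hb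
    simp only [Finset.mem_insert, Finset.mem_singleton] at ha
    rw [Finset.mem_Ico] at hb
    omega
  have hindep2 := hindep.indepFun_finset {0, 1} (Finset.Ico 2 n) hdisj hmeas
  have h0mem : (0 : ℕ) ∈ ({0, 1} : Finset ℕ) := by simp
  have h1mem : (1 : ℕ) ∈ ({0, 1} : Finset ℕ) := by simp
  set g1 : (({0, 1} : Finset ℕ) → ℝ) → ℝ × ℝ := fun v => (v ⟨0, h0mem⟩, v ⟨1, h1mem⟩) with hg1
  have hg1m : Measurable g1 := by fun_prop
  have hpairindep : IndepFun (fun ω => (X 0 ω, X 1 ω))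
      (fun ω (i : (Finset.Ico 2 n : Finset ℕ)) => X i ω) P := by
    exact hindep2.comp hg1m (measurable_id : Measurable (id : ((Finset.Ico 2 n : Finset ℕ) → ℝ) → _))
  -- rewrite B as a preimage
  have hBeq : B = (fun ω (i : (Finset.Ico 2 n : Finset ℕ)) => X i ω) ⁻¹'
      (Set.univ.pi fun _ => I) := by
    ext ω
    simp [hB_def, Set.mem_pi]
  have hprodmeas : P (A ∩ B) = P A * P B := by
    rw [hBeq, hA_def]
    exact hpairindep.measure_inter_preimage_eq_mul s (Set.univ.pi fun _ => I) hs
      (MeasurableSet.univ_pi fun _ => hI)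
  haveI hFprob : IsProbabilityMeasure F := by
    rw [← hdist 0]; exact Measure.isProbabilityMeasure_map (hmeas 0).aemeasurable
  -- law of the pair
  have hpairlaw : P.map (fun ω => (X 0 ω, X 1 ω)) = F.prod F := by
    rw [(indepFun_iff_map_prod_eq_prod_map_map (hmeas 0).aemeasurable
      (hmeas 1).aemeasurable).mp (hindep.indepFun (by norm_num)), hdist 0, hdist 1]
  have hPA : P A = (F.prod F) s := by
    rw [hA_def, ← Measure.map_apply ((hmeas 0).prodMk (hmeas 1)) hs, hpairlaw]
  -- lower bound for the pair probability
  have hpairbound : Fc I * Fc I ≤ (F.prod F) s := by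
    rw [Measure.prod_apply hs]
    have hpt : ∀ x, I.indicator (fun _ => Fc I) x ≤ F (Prod.mk x ⁻¹' s) := by
      intro x
      by_cases hx : x ∈ I
      · rw [Set.indicator_of_mem hx]
        have hsec : Prod.mk x ⁻¹' s = I \ {x} := by
          ext y
          simp only [hs_def, Set.mem_preimage, Set.mem_diff, Set.mem_prod, Set.mem_setOf_eq,
            Set.mem_singleton_iff]
          constructor
          · rintro ⟨⟨-, hy⟩, hne⟩; exact ⟨hy, fun h => hne h.symm⟩
          · rintro ⟨hy, hne⟩; exact ⟨⟨hx, hy⟩, fun h => hne h.symm⟩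
        rw [hsec]
        calc Fc I = Fc (I \ {x}) := (measure_diff_null (hFc x)).symm
          _ ≤ F (I \ {x}) := hle _
      · rw [Set.indicator_of_notMem hx]; exact zero_le
    calc Fc I * Fc I ≤ Fc I * F I := by
          exact mul_le_mul_right (hle _) _
      _ = ∫⁻ x, I.indicator (fun _ => Fc I) x ∂F := by
          rw [lintegral_indicator hI]
          simp [mul_comm]
      _ ≤ ∫⁻ x, F (Prod.mk x ⁻¹' s) ∂F := lintegral_mono hpt
  -- the rest
  have hPB : F I ^ (n - 2) = P B := by
    rw [hB_def]
    have := hindep.measure_inter_preimage_eq_mul (S := Finset.Ico 2 n)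
      (sets := fun _ => I) (fun i _ => hI)
    rw [this]
    have : ∀ i ∈ Finset.Ico 2 n, P (X i ⁻¹' I) = F I := by
      intro i _
      rw [← hdist i, Measure.map_apply (hmeas i) hI]
    rw [Finset.prod_congr rfl this, Finset.prod_const, Nat.card_Ico]
  have hPBge : Fc I ^ (n - 2) ≤ P B := by
    rw [← hPB]
    exact pow_le_pow_left' (hle _) _
  calc Fc I ^ n = (Fc I * Fc I) * Fc I ^ (n - 2) := by
        rw [← pow_two, ← pow_add]
        congr 1
        omega
    _ ≤ P A * P B := mul_le_mul' (hPA ▸ hpairbound) hPBge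
    _ = P (A ∩ B) := hprodmeas.symm
    _ ≤ P _ := measure_mono hsub

lemma exists_base (Fc : Measure ℝ) (hFc : ∀ x : ℝ, Fc {x} = 0) (hFc0 : Fc ≠ 0) :
    ∃ c L : ℝ, 0 < L ∧ (∀ x ∈ Set.Ico c (c + L), L ≤ |x|) ∧ 0 < Fc (Set.Ico c (c + L)) := by
  classical
  set J : ℚ → Set ℝ := fun q =>
    Set.Ico (if 0 < q then (q : ℝ) else 2 * q) ((if 0 < q then (q : ℝ) else 2 * q) + |(q : ℝ)|)
    with hJ
  have hcover : {x : ℝ | x ≠ 0} ⊆ ⋃ q : ℚ, J q := by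
    intro x hx
    simp only [Set.mem_setOf_eq] at hx
    rcases lt_or_gt_of_ne hx with hneg | hpos
    · obtain ⟨q, hq1, hq2⟩ := exists_rat_btwn (show x < x / 2 by linarith)
      have hq0 : (q : ℝ) < 0 := by linarith
      have hq0' : ¬ (0 < q) := by exact_mod_cast not_lt.mpr hq0.le
      refine Set.mem_iUnion.mpr ⟨q, ?_⟩
      simp only [hJ, hq0', if_false, Set.mem_Ico, abs_of_neg hq0]
      constructor <;> linarith
    · obtain ⟨q, hq1, hq2⟩ := exists_rat_btwn (show x / 2 < x by linarith)
      have hq0 : (0 : ℝ) < q := by linarith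
      have hq0' : (0 : ℚ) < q := by exact_mod_cast hq0
      refine Set.mem_iUnion.mpr ⟨q, ?_⟩
      simp only [hJ, hq0', if_true, Set.mem_Ico, abs_of_pos hq0]
      constructor <;> linarith
  have hpos : ∃ q : ℚ, Fc (J q) ≠ 0 := by
    by_contra h
    push_neg at h
    have h1 : Fc (⋃ q : ℚ, J q) = 0 := measure_iUnion_null h
    have h2 : Fc {x : ℝ | x ≠ 0} = 0 := measure_mono_null hcover h1
    have h3 : Fc Set.univ = 0 := by
      have : (Set.univ : Set ℝ) = {x : ℝ | x ≠ 0} ∪ {0} := by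
        ext x; by_cases hx : x = 0 <;> simp [hx]
      rw [this]
      exact le_antisymm ((measure_union_le _ _).trans (by rw [h2, hFc 0]; simp)) zero_le
    exact hFc0 (Measure.measure_univ_eq_zero.mp h3)
  obtain ⟨q, hq⟩ := hpos
  have hqne : q ≠ 0 := by
    rintro rfl
    apply hq
    simp [hJ]
  refine ⟨if 0 < q then (q : ℝ) else 2 * q, |(q : ℝ)|, ?_, ?_, ?_⟩
  · simpa using hqne
  · intro x hxmem
    by_cases hq0 : 0 < q
    · simp only [hq0, if_true, Set.mem_Ico] at hxmem
      have hqpos : (0:ℝ) < q := by exact_mod_cast hq0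
      rw [abs_of_pos hqpos]
      rw [abs_of_pos (lt_of_lt_of_le hqpos hxmem.1)]
      exact hxmem.1
    · simp only [hq0, if_false, Set.mem_Ico] at hxmem
      have hqneg : (q:ℝ) < 0 := by
        have : q < 0 := lt_of_le_of_ne (not_lt.mp hq0) hqne
        exact_mod_cast this
      rw [abs_of_neg hqneg] at hxmem ⊢
      have hxneg : x < 0 := by linarith [hxmem.2]
      rw [abs_of_neg hxneg]
      linarith [hxmem.2]
  · exact pos_iff_ne_zero.mpr hq

lemma tail_bound {Ω : Type*} [MeasurableSpace Ω] (P : Measure Ω) [IsProbabilityMeasure P]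
    (X : ℕ → Ω → ℝ) (hmeas : ∀ i, Measurable (X i))
    (hindep : iIndepFun X P)
    (F Fc : Measure ℝ) (hdist : ∀ i, P.map (X i) = F)
    (hle : Fc ≤ F) (hFc : ∀ x : ℝ, Fc {x} = 0)
    (n : ℕ) (hn : 2 ≤ n) (c L : ℝ) (hL : 0 < L)
    (hIabs : ∀ x ∈ Set.Ico c (c + L), L ≤ |x|)
    (m : ℕ) (hm : 1 ≤ m) :
    ENNReal.ofReal ((Fc (Set.Ico c (c + L))).toReal ^ n / (m : ℝ) ^ (n - 1))
      ≤ P {ω | (m : ℝ) ≤ |Tstat X n ω|} := by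
  classical
  haveI hFprob : IsProbabilityMeasure F := by
    rw [← hdist 0]; exact Measure.isProbabilityMeasure_map (hmeas 0).aemeasurable
  have hFcfin : ∀ s : Set ℝ, Fc s ≠ ⊤ :=
    fun s => ne_top_of_le_ne_top (measure_ne_top F s) (hle s)
  have hmR : (0:ℝ) < m := by exact_mod_cast hm
  have hmR1 : (1:ℝ) ≤ m := by exact_mod_cast hm
  set δ : ℝ := L / m with hδdef
  have hδ : 0 < δ := by positivity
  have hδL : δ ≤ L := by
    rw [hδdef, div_le_iff₀ hmR]
    nlinarith
  have hmδ : (m : ℝ) * δ = L := by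
    rw [hδdef]; field_simp
  set I : ℕ → Set ℝ := fun j => Set.Ico (c + j * δ) (c + j * δ + δ) with hIdef
  have hIsub : ∀ j < m, I j ⊆ Set.Ico c (c + L) := by
    intro j hj x hx
    simp only [hIdef, Set.mem_Ico] at hx ⊢
    have hj1 : (j:ℝ) + 1 ≤ m := by exact_mod_cast hj
    constructor
    · nlinarith [hx.1, hδ.le, Nat.cast_nonneg (α := ℝ) j]
    · nlinarith [hx.2, hδ.le]
  -- events
  set E : ℕ → Set Ω := fun j => {ω | (∀ i < n, X i ω ∈ I j) ∧ X 0 ω ≠ X 1 ω} with hEdef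
  have hImeas : ∀ j, MeasurableSet (I j) := fun j => measurableSet_Ico
  have hEmeas : ∀ j, MeasurableSet (E j) := by
    intro j
    have h1 : MeasurableSet {ω | ∀ i < n, X i ω ∈ I j} := by
      have : {ω | ∀ i < n, X i ω ∈ I j} = ⋂ i ∈ Finset.range n, X i ⁻¹' I j := by
        ext ω; simp [Finset.mem_range]
      rw [this]
      exact Finset.measurableSet_biInter _ fun i _ => (hmeas i) (hImeas j)
    have h2 : MeasurableSet {ω | X 0 ω ≠ X 1 ω} :=
      (measurableSet_eq_fun (hmeas 0) (hmeas 1)).compl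
    exact h1.inter h2
  -- events included in the tail event
  have hEsub : ∀ j < m, E j ⊆ {ω | (m : ℝ) ≤ |Tstat X n ω|} := by
    intro j hj ω hω
    obtain ⟨hmem, hne⟩ := hω
    have habs : ∀ x ∈ Set.Ico (c + j * δ) ((c + j * δ) + δ), L ≤ |x| :=
      fun x hx => hIabs x (hIsub j hj hx)
    have := tstat_large X n hn (c + j * δ) δ L hδ hδL habs ω hmem hne
    have hLdm : L / δ = m := by
      rw [hδdef]; field_simp
    simp only [Set.mem_setOf_eq]
    rw [← hLdm]
    exact this
  -- disjointness
  have hdisjE : (↑(Finset.range m) : Set ℕ).PairwiseDisjoint E := by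
    intro j hj k hk hjk
    have hIdisj : Disjoint (I j) (I k) := by
      apply Set.Ico_disjoint_Ico.mpr
      rcases hjk.lt_or_gt with h | h
      · have h1 : (j:ℝ) + 1 ≤ k := by exact_mod_cast h
        have h2 : c + (j:ℝ) * δ + δ ≤ c + (k:ℝ) * δ := by nlinarith
        exact le_trans (min_le_left _ _) (le_trans h2 (le_max_right _ _))
      · have h1 : (k:ℝ) + 1 ≤ j := by exact_mod_cast h
        have h2 : c + (k:ℝ) * δ + δ ≤ c + (j:ℝ) * δ := by nlinarith
        exact le_trans (min_le_right _ _) (le_trans h2 (le_max_left _ _))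
    apply Set.disjoint_left.mpr
    intro ω h1 h2
    exact Set.disjoint_left.mp hIdisj (h1.1 0 (by omega)) (h2.1 0 (by omega))
  -- cover
  have hcover : Set.Ico c (c + L) ⊆ ⋃ j ∈ Finset.range m, I j := by
    intro x hx
    simp only [Set.mem_Ico] at hx
    have hy0 : 0 ≤ (x - c) / δ := div_nonneg (by linarith [hx.1]) hδ.le
    have hym : (x - c) / δ < m := by
      rw [div_lt_iff₀ hδ]
      nlinarith [hx.2, hmδ]
    refine Set.mem_biUnion (Finset.mem_range.mpr ((Nat.floor_lt hy0).mpr hym)) ?_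
    simp only [hIdef, Set.mem_Ico]
    constructor
    · have h := Nat.floor_le hy0
      rw [le_div_iff₀ hδ] at h
      linarith
    · have h := Nat.lt_floor_add_one ((x - c) / δ)
      rw [div_lt_iff₀ hδ] at h
      nlinarith
  -- measure of the union
  have hsumFc : Fc (Set.Ico c (c + L)) ≤ ∑ j ∈ Finset.range m, Fc (I j) :=
    le_trans (measure_mono hcover) (measure_biUnion_finset_le _ _)
  -- event bound for each j
  have hEb : ∀ j, Fc (I j) ^ n ≤ P (E j) := fun j =>
    event_bound P X hmeas hindep F Fc hdist hle hFc n hn (I j) (hImeas j)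
  -- real versions
  set a : ℕ → ℝ := fun j => (Fc (I j)).toReal with ha
  have ha0 : ∀ j, 0 ≤ a j := fun j => ENNReal.toReal_nonneg
  have hsumR : (Fc (Set.Ico c (c + L))).toReal ≤ ∑ j ∈ Finset.range m, a j := by
    have h1 : (∑ j ∈ Finset.range m, Fc (I j)) ≠ ⊤ := by
      rw [← lt_top_iff_ne_top]
      exact ENNReal.sum_lt_top.mpr fun j _ => lt_top_iff_ne_top.mpr (hFcfin _)
    have := ENNReal.toReal_mono h1 hsumFc
    rwa [ENNReal.toReal_sum (fun j _ => hFcfin _)] at this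
  have hpowmean : (Fc (Set.Ico c (c + L))).toReal ^ n / (m : ℝ) ^ (n - 1)
      ≤ ∑ j ∈ Finset.range m, a j ^ n := by
    have h1 : (Fc (Set.Ico c (c + L))).toReal ^ n ≤ (∑ j ∈ Finset.range m, a j) ^ n :=
      pow_le_pow_left₀ ENNReal.toReal_nonneg hsumR n
    have h2 := pow_sum_div_card_le_sum_pow (s := Finset.range m) (f := a)
      (fun j _ => ha0 j) (n - 1)
    rw [Finset.card_range] at h2
    have hnn : n - 1 + 1 = n := by omega
    rw [hnn] at h2
    calc (Fc (Set.Ico c (c + L))).toReal ^ n / (m : ℝ) ^ (n - 1)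
        ≤ (∑ j ∈ Finset.range m, a j) ^ n / (m : ℝ) ^ (n - 1) := by
          gcongr
      _ ≤ ∑ j ∈ Finset.range m, a j ^ n := h2
  calc ENNReal.ofReal ((Fc (Set.Ico c (c + L))).toReal ^ n / (m : ℝ) ^ (n - 1))
      ≤ ENNReal.ofReal (∑ j ∈ Finset.range m, a j ^ n) := ENNReal.ofReal_le_ofReal hpowmean
    _ = ∑ j ∈ Finset.range m, ENNReal.ofReal (a j ^ n) :=
        ENNReal.ofReal_sum_of_nonneg fun j _ => pow_nonneg (ha0 j) n
    _ = ∑ j ∈ Finset.range m, Fc (I j) ^ n := by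
        refine Finset.sum_congr rfl fun j _ => ?_
        rw [ENNReal.ofReal_pow (ha0 j), ha, ENNReal.ofReal_toReal (hFcfin (I j))]
    _ ≤ ∑ j ∈ Finset.range m, P (E j) := Finset.sum_le_sum fun j _ => hEb j
    _ = P (⋃ j ∈ Finset.range m, E j) :=
        (measure_biUnion_finset hdisjE fun j _ => hEmeas j).symm
    _ ≤ P {ω | (m : ℝ) ≤ |Tstat X n ω|} :=
        measure_mono (Set.iUnion₂_subset fun j hj => hEsub j (Finset.mem_range.mp hj))

lemma lintegral_rpow_diverge (Cst : ℝ) (hC : 0 < Cst) (p : ℝ) (hp : p ≤ 1) :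
    ∫⁻ t in Set.Ioi (1:ℝ), ENNReal.ofReal (Cst * t ^ (-p)) = ⊤ := by
  by_contra h
  have hlt : ∫⁻ t in Set.Ioi (1:ℝ), ENNReal.ofReal (Cst * t ^ (-p)) < ⊤ :=
    lt_top_iff_ne_top.mpr h
  have hmeasf : Measurable fun t : ℝ => Cst * t ^ (-p) := by fun_prop
  have hInt : IntegrableOn (fun t : ℝ => Cst * t ^ (-p)) (Set.Ioi 1) := by
    refine ⟨hmeasf.aestronglyMeasurable, ?_⟩
    rw [hasFiniteIntegral_iff_ofReal ?_]
    · exact hlt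
    · filter_upwards [ae_restrict_mem measurableSet_Ioi] with t ht
      have ht0 : (0:ℝ) ≤ t := le_of_lt (lt_trans zero_lt_one ht)
      exact mul_nonneg hC.le (Real.rpow_nonneg ht0 _)
  have hInt2 : IntegrableOn (fun t : ℝ => t ^ (-p)) (Set.Ioi 1) := by
    have heq : (fun t : ℝ => t ^ (-p)) = fun t : ℝ => Cst⁻¹ * (Cst * t ^ (-p)) := by
      funext t; field_simp
    rw [heq]
    exact hInt.const_mul _
  rw [integrableOn_Ioi_rpow_iff zero_lt_one] at hInt2
  linarith


/-- Theorem 3 (Theorem `thm0`): if the common distribution `F` of the i.i.d. `X_i`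
decomposes as `F = F_d + F_c` with `F_d` discrete, `F_c` atomless and `F_c ≠ 0`, then for
every `n ≥ 2` and every `r ≥ n − 1`, `E|T_n|^r = ∞`. -/
theorem lintegral_tstat_eq_top_of_continuous_part {Ω : Type*} [MeasurableSpace Ω]
    (P : Measure Ω) [IsProbabilityMeasure P]
    (X : ℕ → Ω → ℝ) (hmeas : ∀ i, Measurable (X i))
    (hindep : iIndepFun X P)
    (F Fd Fc : Measure ℝ) (hdist : ∀ i, P.map (X i) = F)
    (hdecomp : F = Fd + Fc)
    (hFd : ∃ s : Set ℝ, s.Countable ∧ Fd sᶜ = 0)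
    (hFc : ∀ x : ℝ, Fc {x} = 0) (hFc0 : Fc ≠ 0)
    (n : ℕ) (hn : 2 ≤ n) (r : ℝ) (hr : (n : ℝ) - 1 ≤ r) :
    (∫⁻ ω, ENNReal.ofReal (|Tstat X n ω| ^ r) ∂P) = ⊤ := by
  classical
  have hle : Fc ≤ F := by
    intro s
    rw [hdecomp]
    simp only [Measure.coe_add, Pi.add_apply]
    exact le_add_self
  haveI hFprob : IsProbabilityMeasure F := by
    rw [← hdist 0]; exact Measure.isProbabilityMeasure_map (hmeas 0).aemeasurable
  have hFcfin : ∀ s : Set ℝ, Fc s ≠ ⊤ :=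
    fun s => ne_top_of_le_ne_top (measure_ne_top F s) (hle s)
  obtain ⟨c, L, hL, hIabs, hFcJ⟩ := exists_base Fc hFc hFc0
  set β : ℝ := (Fc (Set.Ico c (c + L))).toReal with hβdef
  have hβ : 0 < β := ENNReal.toReal_pos (ne_of_gt hFcJ) (hFcfin _)
  -- exponents
  have hn1R : (1:ℝ) ≤ (n:ℝ) - 1 := by
    have : (2:ℝ) ≤ n := by exact_mod_cast hn
    linarith
  have hrpos : 0 < r := lt_of_lt_of_le (by linarith) hr
  set p : ℝ := ((n:ℝ) - 1) / r with hpdef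
  have hp1 : p ≤ 1 := by
    rw [hpdef, div_le_one hrpos]; exact hr
  have hcastn : ((n - 1 : ℕ) : ℝ) = (n : ℝ) - 1 := by
    have := Nat.cast_sub (le_of_lt (lt_of_lt_of_le one_lt_two hn)) (R := ℝ) (m := 1) (n := n)
    simpa using this
  set Cst : ℝ := β ^ n / 2 ^ (n - 1) with hCdef
  have hCst : 0 < Cst := by positivity
  -- measurability
  have hT : Measurable (Tstat X n) := measurable_tstat X hmeas n
  have hf : AEMeasurable (fun ω => |Tstat X n ω| ^ r) P := by fun_prop
  rw [lintegral_eq_lintegral_meas_lt P (Filter.Eventually.of_forall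
    fun ω => Real.rpow_nonneg (abs_nonneg _) r) hf]
  -- pointwise indicator bound
  have key : ∀ t : ℝ, (Set.Ioi (1:ℝ)).indicator
      (fun t => ENNReal.ofReal (Cst * t ^ (-p))) t ≤ P {a | t < |Tstat X n a| ^ r} := by
    intro t
    by_cases ht : t ∈ Set.Ioi (1:ℝ)
    · rw [Set.indicator_of_mem ht]
      have ht1 : (1:ℝ) < t := ht
      have ht0 : (0:ℝ) < t := lt_trans zero_lt_one ht1
      set u : ℝ := t ^ (1 / r) with hudef
      have hu1 : (1:ℝ) ≤ u := by
        rw [hudef]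
        calc (1:ℝ) = 1 ^ (1/r) := (Real.one_rpow _).symm
          _ ≤ t ^ (1/r) := Real.rpow_le_rpow zero_le_one ht1.le (by positivity)
      have hu0 : (0:ℝ) < u := lt_of_lt_of_le zero_lt_one hu1
      set m : ℕ := ⌊u⌋₊ + 1 with hmdef
      have hm1 : 1 ≤ m := by omega
      have hum : u < m := by
        rw [hmdef]
        push_cast
        exact Nat.lt_floor_add_one u
      have hm2u : (m:ℝ) ≤ 2 * u := by
        rw [hmdef]
        push_cast
        have := Nat.floor_le hu0.le
        linarith
      have hur : u ^ r = t := by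
        rw [hudef, ← Real.rpow_mul ht0.le, one_div_mul_cancel (ne_of_gt hrpos), Real.rpow_one]
      -- subset of events
      have hsubset : {ω | (m : ℝ) ≤ |Tstat X n ω|} ⊆ {a | t < |Tstat X n a| ^ r} := by
        intro ω hω
        simp only [Set.mem_setOf_eq] at hω ⊢
        calc t = u ^ r := hur.symm
          _ < (m:ℝ) ^ r := Real.rpow_lt_rpow hu0.le hum hrpos
          _ ≤ |Tstat X n ω| ^ r := Real.rpow_le_rpow (by positivity) hω hrpos.le
      -- numeric bound
      have hnum : Cst * t ^ (-p) ≤ β ^ n / (m:ℝ) ^ (n - 1) := by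
        have htp : t ^ (-p) = ((u ^ (n-1) : ℝ))⁻¹ := by
          have h0 : -p = (1/r) * (-((n:ℝ) - 1)) := by rw [hpdef]; ring
          rw [h0, Real.rpow_mul ht0.le, ← hudef, Real.rpow_neg hu0.le, ← hcastn,
            Real.rpow_natCast]
        have hmpow : (m:ℝ) ^ (n-1) ≤ (2*u) ^ (n-1) := pow_le_pow_left₀ (by positivity) hm2u _
        rw [htp, hCdef]
        calc β ^ n / 2 ^ (n-1) * ((u ^ (n-1) : ℝ))⁻¹ = β ^ n / ((2*u) ^ (n-1)) := by
              rw [mul_pow]; ring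
          _ ≤ β ^ n / (m:ℝ) ^ (n-1) := by gcongr <;> positivity
      calc ENNReal.ofReal (Cst * t ^ (-p))
          ≤ ENNReal.ofReal (β ^ n / (m:ℝ) ^ (n - 1)) := ENNReal.ofReal_le_ofReal hnum
        _ ≤ P {ω | (m : ℝ) ≤ |Tstat X n ω|} :=
            tail_bound P X hmeas hindep F Fc hdist hle hFc n hn c L hL hIabs m hm1
        _ ≤ P {a | t < |Tstat X n a| ^ r} := measure_mono hsubset
    · rw [Set.indicator_of_notMem ht]; exact zero_le
  -- conclude
  have h1 : ∫⁻ t in Set.Ioi (0:ℝ), (Set.Ioi (1:ℝ)).indicator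
      (fun t => ENNReal.ofReal (Cst * t ^ (-p))) t
      = ∫⁻ t in Set.Ioi (1:ℝ), ENNReal.ofReal (Cst * t ^ (-p)) := by
    rw [lintegral_indicator measurableSet_Ioi, Measure.restrict_restrict measurableSet_Ioi,
      Set.inter_eq_left.mpr (Set.Ioi_subset_Ioi zero_le_one)]
  refine eq_top_iff.mpr ?_
  rw [← lintegral_rpow_diverge Cst hCst p hp1, ← h1]
  exact lintegral_mono key

end
end

section
/- Let μ be a finite Borel measure on ℝ with total mass ε > 0 such that μ(ℝ ∖ [−C, C]) = 0 for some C > 0. Then for every h > 0, ∫ μ([x − h, x + h]) dμ(x) ≥ ε² h / (2C + h). -/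
open MeasureTheory Filter

/-- For a finite Borel measure `μ` on `ℝ` with total mass `ε > 0` carried by `[−C, C]`,
and every `h > 0`: `∫ μ([x − h, x + h]) dμ(x) ≥ ε²h/(2C + h)`. -/
theorem lintegral_interval_measure_ge (μ : Measure ℝ) [IsFiniteMeasure μ]
    (C : ℝ) (hC : 0 < C) (hsupp : μ (Set.Icc (-C) C)ᶜ = 0)
    (ε : ℝ) (hε : 0 < ε) (hmass : μ Set.univ = ENNReal.ofReal ε)
    (h : ℝ) (hh : 0 < h) :
    ENNReal.ofReal (ε ^ 2 * h / (2 * C + h)) ≤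
      ∫⁻ x, μ (Set.Icc (x - h) (x + h)) ∂μ := by
  set N : ℕ := ⌈2 * C / h⌉₊ with hNdef
  have hNpos : 0 < N := Nat.ceil_pos.2 (by positivity)
  have hN0 : (0 : ℝ) < N := Nat.cast_pos.2 hNpos
  set δ : ℝ := 2 * C / N with hδdef
  have hδpos : 0 < δ := by positivity
  have hδh : δ ≤ h := by
    rw [hδdef, div_le_iff₀ hN0]
    have h1 : 2 * C / h ≤ N := Nat.le_ceil _
    rw [div_le_iff₀ hh] at h1
    linarith
  set a : ℕ → ℝ := fun i => -C + i * δ with hadef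
  have ha_mono : ∀ {i j : ℕ}, i ≤ j → a i ≤ a j := by
    intro i j hij
    simp only [hadef]
    have : (i : ℝ) ≤ j := Nat.cast_le.2 hij
    nlinarith
  have haN : a N = C := by
    simp only [hadef, hδdef]
    field_simp
    ring
  have hlen : ∀ i : ℕ, a (i + 1) - a i = δ := by
    intro i
    simp only [hadef, Nat.cast_add, Nat.cast_one]
    ring
  set I : ℕ → Set ℝ := fun i => if i = N - 1 then Set.Icc (a i) C else Set.Ico (a i) (a (i + 1))
    with hIdef
  have hIsub : ∀ i : ℕ, i < N → I i ⊆ Set.Icc (a i) (a (i + 1)) := by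
    intro i hi
    simp only [hIdef]
    split_ifs with hcase
    · have : i + 1 = N := by omega
      rw [this, haN]
    · exact Set.Ico_subset_Icc_self
  have hImeas : ∀ i : ℕ, MeasurableSet (I i) := by
    intro i
    simp only [hIdef]
    split_ifs
    · exact measurableSet_Icc
    · exact measurableSet_Ico
  have hdisj : (↑(Finset.range N) : Set ℕ).PairwiseDisjoint I := by
    have key : ∀ i j : ℕ, i < j → j < N → Disjoint (I i) (I j) := by
      intro i j hij hjN
      have hiN : i ≠ N - 1 := by omega
      rw [Set.disjoint_left]
      intro y hyi hyj
      have h1 : y < a (i + 1) := by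
        simp only [hIdef, if_neg hiN] at hyi
        exact hyi.2
      have h2 : a j ≤ y := by
        simp only [hIdef] at hyj
        split_ifs at hyj
        · exact hyj.1
        · exact hyj.1
      have h3 : a (i + 1) ≤ a j := ha_mono (by omega)
      linarith
    intro i hi j hj hij
    simp only [Finset.coe_range, Set.mem_Iio] at hi hj
    rcases lt_or_gt_of_ne hij with hlt | hgt
    · exact key i j hlt hj
    · exact (key j i hgt hi).symm
  -- coverage
  have hcover : Set.Icc (-C) C ⊆ ⋃ i ∈ Finset.range N, I i := by
    intro x hx
    rcases eq_or_lt_of_le hx.2 with hxC | hxC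
    · refine Set.mem_biUnion (Finset.mem_range.2 (by omega : N - 1 < N)) ?_
      simp only [hIdef, if_pos rfl]
      refine ⟨?_, hx.2⟩
      have h1 : a (N - 1) ≤ a N := ha_mono (by omega)
      rw [haN] at h1
      linarith [hx.2]
    · set i : ℕ := ⌊(x + C) / δ⌋₊ with hidef
      have hnn : 0 ≤ (x + C) / δ := div_nonneg (by linarith [hx.1]) hδpos.le
      have hiN : i < N := by
        rw [hidef, Nat.floor_lt hnn]
        rw [div_lt_iff₀ hδpos]
        have : (N : ℝ) * δ = 2 * C := by
          rw [hδdef]; field_simp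
        linarith
      have hai : a i ≤ x := by
        have h1 : (i : ℝ) ≤ (x + C) / δ := Nat.floor_le hnn
        rw [le_div_iff₀ hδpos] at h1
        simp only [hadef]; linarith
      have hai1 : x < a (i + 1) := by
        have h1 : (x + C) / δ < i + 1 := Nat.lt_floor_add_one _
        rw [div_lt_iff₀ hδpos] at h1
        simp only [hadef, Nat.cast_add, Nat.cast_one]; linarith
      refine Set.mem_biUnion (Finset.mem_range.2 hiN) ?_
      simp only [hIdef]
      split_ifs with hcase
      · exact ⟨hai, hx.2⟩
      · exact ⟨hai, hai1⟩
  -- measure of Icc is ε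
  have hμIcc : μ (Set.Icc (-C) C) = ENNReal.ofReal ε := by
    have h1 : μ (Set.Icc (-C) C) + μ (Set.Icc (-C) C)ᶜ = μ Set.univ :=
      measure_add_measure_compl measurableSet_Icc
    rw [hsupp, add_zero] at h1
    rw [h1, hmass]
  -- sum of measures of pieces is at least ε
  have hsum_ge : ENNReal.ofReal ε ≤ ∑ i ∈ Finset.range N, μ (I i) := by
    rw [← measure_biUnion_finset hdisj fun i _ => hImeas i, ← hμIcc]
    exact measure_mono hcover
  -- pass to reals
  set r : ℕ → ℝ := fun i => (μ (I i)).toReal with hrdef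
  have hrnn : ∀ i, 0 ≤ r i := fun i => ENNReal.toReal_nonneg
  have hrofReal : ∀ i, μ (I i) = ENNReal.ofReal (r i) := by
    intro i
    rw [hrdef, ENNReal.ofReal_toReal (measure_ne_top μ _)]
  have hrsum : ε ≤ ∑ i ∈ Finset.range N, r i := by
    have h1 : ENNReal.ofReal ε ≤ ENNReal.ofReal (∑ i ∈ Finset.range N, r i) := by
      rw [ENNReal.ofReal_sum_of_nonneg fun i _ => hrnn i]
      simpa only [← hrofReal] using hsum_ge
    exact (ENNReal.ofReal_le_ofReal_iff (Finset.sum_nonneg fun i _ => hrnn i)).1 h1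
  -- Cauchy-Schwarz
  have hCS : ε ^ 2 / N ≤ ∑ i ∈ Finset.range N, r i ^ 2 := by
    have h1 : (∑ i ∈ Finset.range N, r i) ^ 2 ≤
        (N : ℝ) * ∑ i ∈ Finset.range N, r i ^ 2 := by
      have := sq_sum_le_card_mul_sum_sq (s := Finset.range N) (f := r)
      simpa [Finset.card_range] using this
    have h2 : ε ^ 2 ≤ (∑ i ∈ Finset.range N, r i) ^ 2 := by
      have := Finset.sum_nonneg (s := Finset.range N) fun i _ => hrnn i
      nlinarith
    rw [div_le_iff₀ hN0]
    nlinarith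
  -- arithmetic: ε²h/(2C+h) ≤ ε²/N
  have harith : ε ^ 2 * h / (2 * C + h) ≤ ε ^ 2 / N := by
    rw [div_le_div_iff₀ (by positivity) hN0]
    have h1 : (N : ℝ) < 2 * C / h + 1 := Nat.ceil_lt_add_one (by positivity)
    have h2 : (N : ℝ) * h ≤ 2 * C + h := by
      have h1' : (N : ℝ) - 1 < 2 * C / h := by linarith
      rw [lt_div_iff₀ hh] at h1'
      nlinarith
    nlinarith [sq_nonneg ε, hε]
  -- per-interval lower bound on the integral
  have hint : ∀ i ∈ Finset.range N, μ (I i) * μ (I i) ≤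
      ∫⁻ x in I i, μ (Set.Icc (x - h) (x + h)) ∂μ := by
    intro i hi
    rw [Finset.mem_range] at hi
    have hsub : ∀ x ∈ I i, I i ⊆ Set.Icc (x - h) (x + h) := by
      intro x hx y hy
      have hx' := hIsub i hi hx
      have hy' := hIsub i hi hy
      have hlen' := hlen i
      constructor
      · linarith [hx'.2, hy'.1]
      · linarith [hx'.1, hy'.2]
    calc μ (I i) * μ (I i) = ∫⁻ _ in I i, μ (I i) ∂μ := (setLIntegral_const _ _).symm
    _ ≤ ∫⁻ x in I i, μ (Set.Icc (x - h) (x + h)) ∂μ := by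
        refine lintegral_mono_ae ?_
        rw [ae_restrict_iff' (hImeas i)]
        exact ae_of_all _ fun x hx => measure_mono (hsub x hx)
  -- put everything together
  calc ENNReal.ofReal (ε ^ 2 * h / (2 * C + h)) ≤ ENNReal.ofReal (ε ^ 2 / N) :=
        ENNReal.ofReal_le_ofReal harith
  _ ≤ ENNReal.ofReal (∑ i ∈ Finset.range N, r i ^ 2) := ENNReal.ofReal_le_ofReal hCS
  _ = ∑ i ∈ Finset.range N, μ (I i) * μ (I i) := by
      rw [ENNReal.ofReal_sum_of_nonneg fun i _ => sq_nonneg (r i)]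
      refine Finset.sum_congr rfl fun i _ => ?_
      rw [hrofReal i, ← ENNReal.ofReal_mul (hrnn i), sq]
  _ ≤ ∑ i ∈ Finset.range N, ∫⁻ x in I i, μ (Set.Icc (x - h) (x + h)) ∂μ :=
      Finset.sum_le_sum hint
  _ = ∫⁻ x in ⋃ i ∈ Finset.range N, I i, μ (Set.Icc (x - h) (x + h)) ∂μ :=
      (lintegral_biUnion_finset hdisj (fun i _ => hImeas i) _).symm
  _ ≤ ∫⁻ x, μ (Set.Icc (x - h) (x + h)) ∂μ := setLIntegral_le_lintegral _ _
end

section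
/- Let n ≥ 2 and let μ be a nonzero finite Borel measure on ℝ such that μ(ℝ ∖ ([−C, −1/C] ∪ [1/C, C])) = 0 for some C > 1. Then there exists a constant η > 0 such that for every h ∈ (0, 1], ∫ (μ((x − h, x + h)) / h)^{n−1} dμ(x) ≥ η. -/
open MeasureTheory Filter

/-- Power mean inequality for `ℝ≥0∞`-valued sums with finite terms. -/
lemma ennreal_pow_sum_le (s : Finset ℕ) (a : ℕ → ENNReal) (ha : ∀ j ∈ s, a j ≠ ⊤) (m : ℕ) :
    (∑ j ∈ s, a j) ^ (m + 1) ≤ (s.card : ENNReal) ^ m * ∑ j ∈ s, a j ^ (m + 1) := by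
  have hS : (∑ j ∈ s, a j) ≠ ⊤ := by
    simp only [ne_eq, ENNReal.sum_eq_top]; push_neg; exact ha
  have hS' : (∑ j ∈ s, a j ^ (m+1)) ≠ ⊤ := by
    simp only [ne_eq, ENNReal.sum_eq_top]; push_neg
    exact fun j hj => ENNReal.pow_ne_top (ha j hj)
  rw [← ENNReal.toReal_le_toReal (ENNReal.pow_ne_top hS)
      (ENNReal.mul_ne_top (by simp) hS')]
  rw [ENNReal.toReal_pow, ENNReal.toReal_mul, ENNReal.toReal_pow, ENNReal.toReal_sum ha,
    ENNReal.toReal_sum (fun j hj => ENNReal.pow_ne_top (ha j hj)), ENNReal.toReal_natCast]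
  simp only [ENNReal.toReal_pow]
  exact pow_sum_le_card_mul_sum_pow (fun i _ => ENNReal.toReal_nonneg) m

/-- For `n ≥ 2` and a nonzero finite Borel measure `μ` on `ℝ` carried by
`[−C, −1/C] ∪ [1/C, C]` for some `C > 1`, there is a constant `η > 0` such that for every
`h ∈ (0, 1]`: `∫ (μ((x − h, x + h))/h)^{n−1} dμ(x) ≥ η`. -/
theorem exists_lintegral_concentration_ge (n : ℕ) (hn : 2 ≤ n)
    (μ : Measure ℝ) [IsFiniteMeasure μ] (hμ : μ ≠ 0)
    (C : ℝ) (hC : 1 < C)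
    (hsupp : μ (Set.Icc (-C) (-(1 / C)) ∪ Set.Icc (1 / C) C)ᶜ = 0) :
    ∃ η : ℝ, 0 < η ∧ ∀ h : ℝ, h ∈ Set.Ioc (0 : ℝ) 1 →
      ENNReal.ofReal η ≤
        ∫⁻ x, (μ (Set.Ioo (x - h) (x + h)) / ENNReal.ofReal h) ^ (n - 1) ∂μ := by
  obtain ⟨k, rfl⟩ : ∃ k, n = k + 2 := ⟨n - 2, by omega⟩
  set m := k + 1 with hm
  have hsub : k + 2 - 1 = m := rfl
  have hC0 : (0:ℝ) < C := by linarith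
  have hμpos : 0 < μ Set.univ := by
    rwa [MeasureTheory.Measure.measure_univ_pos]
  have hμtop : μ Set.univ ≠ ⊤ := measure_ne_top μ _
  refine ⟨(μ Set.univ).toReal ^ (m+1) / (3*C) ^ m, by
    have := ENNReal.toReal_pos hμpos.ne' hμtop; positivity, ?_⟩
  intro h hh
  obtain ⟨hh0, hh1⟩ := hh
  set H := ENNReal.ofReal h with hH
  have hH0 : H ≠ 0 := by rw [hH]; exact (ENNReal.ofReal_pos.mpr hh0).ne'
  have hHtop : H ≠ ⊤ := ENNReal.ofReal_ne_top
  -- The key identity for the candidate constant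
  have hη : ENNReal.ofReal ((μ Set.univ).toReal ^ (m+1) / (3*C) ^ m)
      = (μ Set.univ) ^ (m+1) / (ENNReal.ofReal (3*C)) ^ m := by
    rw [ENNReal.ofReal_div_of_pos (by positivity), ENNReal.ofReal_pow ENNReal.toReal_nonneg,
      ENNReal.ofReal_toReal hμtop, ENNReal.ofReal_pow (by positivity)]
  rw [hsub, hη]
  -- Set up the covering intervals
  set N : ℕ := ⌊2*C/h⌋₊ + 1 with hN
  set I : ℕ → Set ℝ := fun j => Set.Ico (-C + j*h) (-C + (j+1)*h) with hI
  have hIm : ∀ j, MeasurableSet (I j) := fun j => measurableSet_Ico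
  -- disjointness
  have hdisj : ∀ i j : ℕ, i ≠ j → ∀ x, x ∈ I i → x ∉ I j := by
    rintro i j hij x ⟨hx1, hx2⟩ ⟨hy1, hy2⟩
    rcases hij.lt_or_gt with hlt | hlt
    · have : (i:ℝ) + 1 ≤ j := by exact_mod_cast hlt
      nlinarith
    · have : (j:ℝ) + 1 ≤ i := by exact_mod_cast hlt
      nlinarith
  -- covering
  have hcover : Set.Icc (-C) C ⊆ ⋃ j ∈ Finset.range N, I j := by
    rintro x ⟨hx1, hx2⟩
    have hx0 : (0:ℝ) ≤ x + C := by linarith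
    set j := ⌊(x + C)/h⌋₊ with hj
    have hj1 : (j:ℝ) * h ≤ x + C := by
      rw [← le_div_iff₀ hh0]; exact Nat.floor_le (by positivity)
    have hj2 : x + C < ((j:ℝ) + 1) * h := by
      rw [← div_lt_iff₀ hh0]; push_cast; exact Nat.lt_floor_add_one _
    have hjN : j < N := by
      have hle : (x + C)/h ≤ 2*C/h := by
        apply div_le_div_of_nonneg_right ?_ ?_ <;> linarith
      have : j ≤ ⌊2*C/h⌋₊ := Nat.floor_mono hle
      omega
    refine Set.mem_biUnion (Finset.mem_range.mpr hjN) ?_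
    refine ⟨by linarith, by push_cast; linarith⟩
  -- support has full measure inside [-C, C]
  have hsub2 : (Set.Icc (-C) (-(1 / C)) ∪ Set.Icc (1 / C) C) ⊆ Set.Icc (-C) C := by
    have h1 : (0:ℝ) < 1/C := by positivity
    rintro x (⟨h1', h2'⟩ | ⟨h1', h2'⟩) <;> exact ⟨by linarith, by linarith⟩
  have hfull : μ Set.univ ≤ μ (Set.Icc (-C) C) := by
    have hcompl : μ (Set.Icc (-C) C)ᶜ = 0 :=
      measure_mono_null (Set.compl_subset_compl.mpr hsub2) hsupp
    rw [← measure_add_measure_compl (measurableSet_Icc : MeasurableSet (Set.Icc (-C) C)),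
      hcompl, add_zero]
  have hsumN : μ Set.univ ≤ ∑ j ∈ Finset.range N, μ (I j) :=
    hfull.trans ((measure_mono hcover).trans (measure_biUnion_finset_le _ _))
  -- pointwise lower bound by indicator sum
  set g : ℝ → ENNReal := fun x =>
    ∑ j ∈ Finset.range N, (I j).indicator (fun _ => (μ (I j) / H) ^ m) x with hg
  have hpt : ∀ x, g x ≤ (μ (Set.Ioo (x - h) (x + h)) / H) ^ m := by
    intro x
    by_cases hx : ∃ j ∈ Finset.range N, x ∈ I j
    · obtain ⟨j0, hj0, hxj0⟩ := hx
      have hgx : g x = (I j0).indicator (fun _ => (μ (I j0) / H) ^ m) x :=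
        Finset.sum_eq_single_of_mem j0 hj0
          (fun j _ hne => Set.indicator_of_notMem (hdisj j0 j (Ne.symm hne) x hxj0) _)
      rw [hgx, Set.indicator_of_mem hxj0]
      gcongr
      obtain ⟨hx1, hx2⟩ := hxj0
      rintro y ⟨hy1, hy2⟩
      exact ⟨by linarith, by linarith⟩
    · push_neg at hx
      have hgx : g x = 0 :=
        Finset.sum_eq_zero (fun j hj => Set.indicator_of_notMem (hx j hj) _)
      rw [hgx]; exact zero_le
  have hint : ∑ j ∈ Finset.range N, (μ (I j) / H) ^ m * μ (I j)
      ≤ ∫⁻ x, (μ (Set.Ioo (x - h) (x + h)) / H) ^ m ∂μ := by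
    have heq : ∫⁻ x, g x ∂μ = ∑ j ∈ Finset.range N, (μ (I j) / H) ^ m * μ (I j) := by
      simp only [hg]
      rw [lintegral_finset_sum _ (fun j _ => measurable_const.indicator (hIm j))]
      exact Finset.sum_congr rfl fun j _ => lintegral_indicator_const (hIm j) _
    rw [← heq]
    exact lintegral_mono hpt
  -- algebraic manipulation of the sum
  have halg : ∑ j ∈ Finset.range N, (μ (I j) / H) ^ m * μ (I j)
      = (∑ j ∈ Finset.range N, μ (I j) ^ (m+1)) * (H ^ m)⁻¹ := by
    rw [Finset.sum_mul]
    refine Finset.sum_congr rfl fun j _ => ?_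
    rw [div_eq_mul_inv, mul_pow, ← ENNReal.inv_pow, pow_succ]
    ring
  -- power mean
  have hpm : (μ Set.univ) ^ (m+1) ≤ (N : ENNReal) ^ m * ∑ j ∈ Finset.range N, μ (I j) ^ (m+1) := by
    calc (μ Set.univ) ^ (m+1) ≤ (∑ j ∈ Finset.range N, μ (I j)) ^ (m+1) := by gcongr
      _ ≤ (N : ENNReal) ^ m * ∑ j ∈ Finset.range N, μ (I j) ^ (m+1) := by
          have := ennreal_pow_sum_le (Finset.range N) (fun j => μ (I j))
            (fun j _ => measure_ne_top μ _) m
          simpa using this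
  -- N * h ≤ 3C
  have hNh : (N:ℝ) * h ≤ 3 * C := by
    have h2 : (⌊2*C/h⌋₊:ℝ) * h ≤ 2*C := by
      calc (⌊2*C/h⌋₊:ℝ) * h ≤ (2*C/h) * h :=
            mul_le_mul_of_nonneg_right (Nat.floor_le (by positivity)) hh0.le
        _ = 2*C := div_mul_cancel₀ _ hh0.ne'
    have : (N:ℝ) = (⌊2*C/h⌋₊:ℝ) + 1 := by rw [hN]; push_cast; ring
    rw [this]; nlinarith
  have hNH : (N : ENNReal) * H ≤ ENNReal.ofReal (3*C) := by
    rw [hH, ← ENNReal.ofReal_natCast, ← ENNReal.ofReal_mul (by positivity)]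
    exact ENNReal.ofReal_le_ofReal hNh
  -- final chain
  have hNm0 : ((N : ENNReal) ^ m) ≠ 0 := by
    simp [hN]
  have hNmtop : ((N : ENNReal) ^ m) ≠ ⊤ := by
    exact ENNReal.pow_ne_top (ENNReal.natCast_ne_top N)
  calc (μ Set.univ) ^ (m+1) / (ENNReal.ofReal (3*C)) ^ m
      ≤ (μ Set.univ) ^ (m+1) / ((N : ENNReal) * H) ^ m := by
        gcongr
    _ = (μ Set.univ) ^ (m+1) / ((N : ENNReal) ^ m * H ^ m) := by rw [mul_pow]
    _ = (μ Set.univ) ^ (m+1) * ((N : ENNReal) ^ m)⁻¹ * (H ^ m)⁻¹ := by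
        rw [div_eq_mul_inv, ENNReal.mul_inv (Or.inl hNm0) (Or.inl hNmtop), mul_assoc]
    _ ≤ (∑ j ∈ Finset.range N, μ (I j) ^ (m+1)) * (H ^ m)⁻¹ := by
        gcongr ?_ * _
        calc (μ Set.univ) ^ (m+1) * ((N : ENNReal) ^ m)⁻¹
            ≤ ((N : ENNReal) ^ m * ∑ j ∈ Finset.range N, μ (I j) ^ (m+1))
              * ((N : ENNReal) ^ m)⁻¹ := by gcongr
          _ = ∑ j ∈ Finset.range N, μ (I j) ^ (m+1) := by
              rw [mul_comm ((N : ENNReal) ^ m), mul_assoc,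
                ENNReal.mul_inv_cancel hNm0 hNmtop, mul_one]
    _ = ∑ j ∈ Finset.range N, (μ (I j) / H) ^ m * μ (I j) := halg.symm
    _ ≤ _ := hint
end
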